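/- arXiv:1708.03728 — 5 statements merged into one kernel-verified Lean document; each statement's English description precedes it below -/
import Mathlib

section
/- Let N ≥ 1 be an integer. There exists a constant C > 0, depending only on N, such that for every function u : ℝ^N → ℂ of Σ-class one has (∫_{ℝ^N} |u(x)|^{2−1/N} dx)^{1/(2−1/N)} ≤ C ‖u‖_Σ. In particular the inclusion Σ ↪ L^{2−1/N}(ℝ^N) is continuous. -/
open MeasureTheory Real Filter Topology
open scoped InnerProductSpace BigOperators

noncomputable section

/-- Euclidean space ℝ^N. -/
abbrev Sp (N : ℕ) := EuclideanSpace ℝ (Fin N)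

variable {N : ℕ}

/-- The j-th partial derivative of a complex-valued function on ℝ^N. -/
def pd (u : Sp N → ℂ) (j : Fin N) (x : Sp N) : ℂ :=
  fderiv ℝ u x (EuclideanSpace.single j 1)

/-- |∇u(x)|², the squared euclidean length of the gradient. -/
def gradSq (u : Sp N → ℂ) (x : Sp N) : ℝ :=
  ∑ j, ‖pd u j x‖ ^ 2

/-- The j-th partial derivative of a real-valued function on ℝ^N. -/
def pdR (u : Sp N → ℝ) (j : Fin N) (x : Sp N) : ℝ :=
  fderiv ℝ u x (EuclideanSpace.single j 1)

/-- |∇u(x)|² for a real-valued function. -/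
def gradSqR (u : Sp N → ℝ) (x : Sp N) : ℝ :=
  ∑ j, pdR u j x ^ 2

/-- The Laplacian of a real-valued function. -/
def lapR (u : Sp N → ℝ) (x : Sp N) : ℝ :=
  ∑ j, fderiv ℝ (fun y => pdR u j y) x (EuclideanSpace.single j 1)

/-- The Laplacian of a complex-valued function. -/
def lap (u : Sp N → ℂ) (x : Sp N) : ℂ :=
  ∑ j, fderiv ℝ (fun y => pd u j y) x (EuclideanSpace.single j 1)

/-- Σ-class: C¹ with u, ∇u and |x|u square integrable. -/
def IsSigma (u : Sp N → ℂ) : Prop :=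
  ContDiff ℝ 1 u ∧ Integrable (fun x => ‖u x‖ ^ 2) ∧
    Integrable (fun x => gradSq u x) ∧
    Integrable (fun x => ‖x‖ ^ 2 * ‖u x‖ ^ 2)

/-- Σ-class for real-valued functions. -/
def IsSigmaR (u : Sp N → ℝ) : Prop :=
  ContDiff ℝ 1 u ∧ Integrable (fun x => u x ^ 2) ∧
    Integrable (fun x => gradSqR u x) ∧
    Integrable (fun x => ‖x‖ ^ 2 * u x ^ 2)

/-- The squared Σ-norm. -/
def sigmaNormSq (u : Sp N → ℂ) : ℝ :=
  ∫ x, (gradSq u x + ‖x‖ ^ 2 * ‖u x‖ ^ 2 + ‖u x‖ ^ 2)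

/-- The integrand |u|² log |u|² (with the convention 0 log 0 = 0, as Real.log 0 = 0). -/
def logTerm (u : Sp N → ℂ) (x : Sp N) : ℝ :=
  ‖u x‖ ^ 2 * Real.log (‖u x‖ ^ 2)

/-- W-class: C¹ with u, ∇u square integrable and |u|² log|u|² integrable. -/
def IsW (u : Sp N → ℂ) : Prop :=
  ContDiff ℝ 1 u ∧ Integrable (fun x => ‖u x‖ ^ 2) ∧
    Integrable (fun x => gradSq u x) ∧ Integrable (logTerm u)

/-- The Gausson R(x) = e^{(1+N)/2} e^{-|x|²}. -/
def gausson (N : ℕ) (x : Sp N) : ℝ :=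
  Real.exp ((1 + N) / 2) * Real.exp (-‖x‖ ^ 2)

/-- The mass of the Gausson, m = ∫ R². -/
def massR (N : ℕ) : ℝ := ∫ x, gausson N x ^ 2

/-- The energy 𝓔(u) = ½∫|∇u|² - ∫|u|² log|u|². -/
def energy (u : Sp N → ℂ) : ℝ :=
  (1 / 2) * (∫ x, gradSq u x) - ∫ x, logTerm u x

/-- The energy of the Gausson, 𝓔(R). -/
def energyR (N : ℕ) : ℝ :=
  (1 / 2) * (∫ x, gradSqR (gausson N) x)
    - ∫ x, gausson N x ^ 2 * Real.log (gausson N x ^ 2)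

/-- The squared H¹ norm. -/
def h1NormSq (u : Sp N → ℂ) : ℝ :=
  (∫ x, gradSq u x) + ∫ x, ‖u x‖ ^ 2

/-- The squared H¹ distance ‖φ - e^{iθ}R(·-y)‖²_{H¹}. -/
def h1DistToGausson (N : ℕ) (φ : Sp N → ℂ) (y : Sp N) (θ : ℝ) : ℝ :=
  (∫ x, ∑ j, ‖pd φ j x - Complex.exp (Complex.I * (θ : ℂ)) * (pdR (gausson N) j (x - y) : ℝ)‖ ^ 2)
    + ∫ x, ‖φ x - Complex.exp (Complex.I * (θ : ℂ)) * (gausson N (x - y) : ℝ)‖ ^ 2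

/-- The Gausson-type initial datum u_{ε,0}(x) = e^{i x·v₀/ε} R((x-x₀)/ε). -/
def gaussonInit (N : ℕ) (x₀ v₀ : Sp N) (ε : ℝ) (x : Sp N) : ℂ :=
  Complex.exp (Complex.I * ((⟪x, v₀⟫_ℝ / ε : ℝ) : ℂ)) * (gausson N (ε⁻¹ • (x - x₀)) : ℝ)

/-- The scaled energy E_ε(u); note 1/(2ε^{N-2}) = ε²/(2ε^N). -/
def Eeps (N : ℕ) (V : Sp N → ℝ) (ε : ℝ) (u : Sp N → ℂ) : ℝ :=
  (ε ^ 2 / (2 * ε ^ N)) * (∫ x, gradSq u x)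
    + (ε ^ N)⁻¹ * (∫ x, V x * ‖u x‖ ^ 2)
    - (ε ^ N)⁻¹ * ∫ x, logTerm u x

/-- V is Cᵏ and bounded together with its derivatives up to order k. -/
def BddDerivs (N : ℕ) (V : Sp N → ℝ) (k : ℕ) : Prop :=
  ContDiff ℝ (k : ℕ∞) V ∧ ∀ i : ℕ, i ≤ k → ∃ B : ℝ, ∀ x, ‖iteratedFDeriv ℝ i V x‖ ≤ B

/-- The action S(u) = ¼∫|∇u|² + ∫|u|² - ½∫|u|² log|u|². -/
def actionS (u : Sp N → ℂ) : ℝ :=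
  (1 / 4) * (∫ x, gradSq u x) + (∫ x, ‖u x‖ ^ 2) - (1 / 2) * ∫ x, logTerm u x

/-- The quadratic form Q(z) = ½∫|∇z|² + 2∫|x|²|z|² - N∫|z|² - 2∫(Re z)². -/
def quadQ (N : ℕ) (z : Sp N → ℂ) : ℝ :=
  (1 / 2) * (∫ x, gradSq z x) + 2 * (∫ x, ‖x‖ ^ 2 * ‖z x‖ ^ 2)
    - N * (∫ x, ‖z x‖ ^ 2) - 2 * ∫ x, (z x).re ^ 2

/-- The squared scaled H¹_ε norm: ε^{2-N}∫|∇φ|² + ε^{-N}∫|φ|². -/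
def h1EpsNormSq (N : ℕ) (ε : ℝ) (u : Sp N → ℂ) : ℝ :=
  ε ^ (2 - (N : ℝ)) * (∫ x, gradSq u x) + (ε ^ N)⁻¹ * ∫ x, ‖u x‖ ^ 2

/-- Second-order Taylor expansion of the action S at the Gausson R, with second
variation given by the quadratic form Q. -/
def TaylorS (N : ℕ) : Prop :=
  ∀ η > (0 : ℝ), ∃ ρ > (0 : ℝ), ∀ w : Sp N → ℂ, IsSigma w → Integrable (logTerm w) →
    Real.sqrt (h1NormSq (fun x => w x - (gausson N x : ℂ))) < ρ →
    |actionS w - actionS (fun x => (gausson N x : ℂ))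
        - (1 / 2) * quadQ N (fun x => w x - (gausson N x : ℂ))|
      ≤ η * h1NormSq (fun x => w x - (gausson N x : ℂ))

/-- continuity of the embedding Σ(ℝ^N) ↪ L^{2-1/N}(ℝ^N). -/
theorem stmt0 (N : ℕ) (hN : 1 ≤ N) :
    ∃ C : ℝ, 0 < C ∧ ∀ u : Sp N → ℂ, IsSigma u →
      eLpNorm u (ENNReal.ofReal (2 - 1 / N)) volume ≤
        ENNReal.ofReal (C * Real.sqrt (sigmaNormSq u)) := by
  have hN1 : (1:ℝ) ≤ N := by exact_mod_cast hN
  have hNpos : (0:ℝ) < N := by linarith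
  set r : ℝ := 4 * N - 2 with hr
  have hrpos : (0:ℝ) < r := by simp only [hr]; linarith
  set φ : Sp N → ℝ := fun x => (1 + ‖x‖)⁻¹ with hφdef
  have hφcont : Continuous φ :=
    (continuous_const.add continuous_norm).inv₀ (fun x => (by positivity : (0:ℝ) < 1 + ‖x‖).ne')
  have hq0 : ENNReal.ofReal r ≠ 0 := by
    simp only [ne_eq, ENNReal.ofReal_eq_zero, not_le]; exact hrpos
  have hqt : ENNReal.ofReal r ≠ ⊤ := ENNReal.ofReal_ne_top
  have hfin : (∫⁻ x : Sp N, ENNReal.ofReal ((1 + ‖x‖) ^ (-r))) < ⊤ := by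
    apply finite_integral_one_add_norm
    simp only [finrank_euclideanSpace, Fintype.card_fin, hr]
    linarith
  have hA : eLpNorm φ (ENNReal.ofReal r) volume ≠ ⊤ := by
    rw [eLpNorm_eq_lintegral_rpow_enorm_toReal hq0 hqt, ENNReal.toReal_ofReal hrpos.le]
    have hpt : ∀ x : Sp N, ‖φ x‖ₑ ^ r = ENNReal.ofReal ((1 + ‖x‖) ^ (-r)) := by
      intro x
      have h1 : (0:ℝ) < 1 + ‖x‖ := by positivity
      rw [← ofReal_norm,
        ENNReal.ofReal_rpow_of_nonneg (norm_nonneg _) hrpos.le]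
      congr 1
      rw [hφdef, Real.norm_eq_abs, abs_of_nonneg (by positivity),
        Real.inv_rpow h1.le, ← Real.rpow_neg h1.le]
    simp_rw [hpt]
    exact (ENNReal.rpow_lt_top_of_nonneg (by positivity) hfin.ne).ne
  set K : ℝ := (eLpNorm φ (ENNReal.ofReal r) volume).toReal with hK
  have hK0 : 0 ≤ K := ENNReal.toReal_nonneg
  refine ⟨K * Real.sqrt 2 + 1, by positivity, fun u hu => ?_⟩
  obtain ⟨hC1, hu2, hgrad, hxu⟩ := hu
  have hucont : Continuous u := hC1.continuous
  set g : Sp N → ℂ := fun x => (1 + ‖x‖) • u x with hgdef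
  have hgcont : Continuous g := (continuous_const.add continuous_norm).smul hucont
  have h_eq : ∀ x, φ x • g x = u x := by
    intro x
    have h1 : (0:ℝ) < 1 + ‖x‖ := by positivity
    simp only [hφdef, hgdef, smul_smul, inv_mul_cancel₀ h1.ne', one_smul]
  have hpqr : 1 / ENNReal.ofReal (2 - 1 / N) = 1 / ENNReal.ofReal r + 1 / 2 := by
    have hp0 : (0:ℝ) < 2 - 1 / N := by
      have : 1 / (N:ℝ) ≤ 1 := by
        rw [div_le_one hNpos]; exact hN1
      linarith
    have hp0' : (0:ℝ) < 2 - (N:ℝ)⁻¹ := by rw [← one_div]; exact hp0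
    have h2 : ((2:ENNReal))⁻¹ = ENNReal.ofReal 2⁻¹ := by
      rw [ENNReal.ofReal_inv_of_pos two_pos, ENNReal.ofReal_ofNat]
    simp only [one_div]
    rw [← ENNReal.ofReal_inv_of_pos hp0', ← ENNReal.ofReal_inv_of_pos hrpos, h2,
      ← ENNReal.ofReal_add (by positivity) (by positivity)]
    congr 1
    have h3 : (2:ℝ) * N - 1 ≠ 0 := by linarith
    have h4 : (4:ℝ) * N - 2 ≠ 0 := by linarith
    rw [hr]
    field_simp
    have h5 : (-2 + (N:ℝ) * 4)⁻¹ * (-2 + N * 4) = 1 := inv_mul_cancel₀ (by linarith)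
    linear_combination -h5
  have hHolder :
      eLpNorm (fun x => φ x • g x) (ENNReal.ofReal (2 - 1 / N)) volume ≤
        eLpNorm φ (ENNReal.ofReal r) volume * eLpNorm g 2 volume := by
    haveI : ENNReal.HolderTriple (ENNReal.ofReal r) 2 (ENNReal.ofReal (2 - 1 / N)) :=
      ⟨by simpa only [one_div] using hpqr.symm⟩
    have key := eLpNorm_le_eLpNorm_mul_eLpNorm'_of_norm (p := ENNReal.ofReal r) (q := 2)
      (r := ENNReal.ofReal (2 - 1 / N)) (μ := volume) hφcont.aestronglyMeasurable
      hgcont.aestronglyMeasurable (fun a z => a • z) 1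
      (Eventually.of_forall fun x => by simp [norm_smul])
    simpa using key
  have hbound : ∀ x, ‖g x‖ ^ 2 ≤ 2 * (‖u x‖ ^ 2 + ‖x‖ ^ 2 * ‖u x‖ ^ 2) := by
    intro x
    have h1 : ‖g x‖ = (1 + ‖x‖) * ‖u x‖ := by
      rw [hgdef, norm_smul, Real.norm_eq_abs, abs_of_nonneg (by positivity)]
    rw [h1]
    nlinarith [mul_nonneg (sq_nonneg (1 - ‖x‖)) (sq_nonneg (‖u x‖)), norm_nonneg x,
      norm_nonneg (u x), sq_nonneg (‖u x‖)]
  have hGint : Integrable (fun x : Sp N => 2 * (‖u x‖ ^ 2 + ‖x‖ ^ 2 * ‖u x‖ ^ 2)) :=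
    (hu2.add hxu).const_mul 2
  have hg2 : Integrable (fun x => ‖g x‖ ^ 2) := by
    refine hGint.mono' ((hgcont.norm.pow 2).aestronglyMeasurable)
      (Eventually.of_forall fun x => ?_)
    rw [Real.norm_eq_abs, abs_of_nonneg (by positivity)]
    exact hbound x
  have hgmem : MemLp g 2 volume :=
    (memLp_two_iff_integrable_sq_norm hgcont.aestronglyMeasurable).2 hg2
  have hσ : sigmaNormSq u = (∫ x, gradSq u x) + (∫ x, ‖x‖ ^ 2 * ‖u x‖ ^ 2) + ∫ x, ‖u x‖ ^ 2 := by
    unfold sigmaNormSq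
    have hfg : Integrable (fun x : Sp N => gradSq u x + ‖x‖ ^ 2 * ‖u x‖ ^ 2) volume :=
      hgrad.add hxu
    rw [integral_add hfg hu2, integral_add hgrad hxu]
  have hgrad0 : 0 ≤ ∫ x, gradSq u x :=
    integral_nonneg fun x => Finset.sum_nonneg fun j _ => sq_nonneg _
  have hσ0 : 0 ≤ sigmaNormSq u := by
    rw [hσ]
    have h1 : 0 ≤ ∫ x, ‖x‖ ^ 2 * ‖u x‖ ^ 2 := integral_nonneg fun x => by positivity
    have h2 : 0 ≤ ∫ x, ‖u x‖ ^ 2 := integral_nonneg fun x => by positivity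
    linarith
  have hintle : (∫ x, ‖g x‖ ^ 2) ≤ 2 * sigmaNormSq u := by
    calc (∫ x, ‖g x‖ ^ 2) ≤ ∫ x, 2 * (‖u x‖ ^ 2 + ‖x‖ ^ 2 * ‖u x‖ ^ 2) :=
          integral_mono hg2 hGint hbound
      _ ≤ 2 * sigmaNormSq u := by
          rw [integral_const_mul, integral_add hu2 hxu, hσ]
          linarith
  have hg2norm : eLpNorm g 2 volume ≤
      ENNReal.ofReal (Real.sqrt 2 * Real.sqrt (sigmaNormSq u)) := by
    rw [hgmem.eLpNorm_eq_integral_rpow_norm two_ne_zero ENNReal.ofNat_ne_top]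
    apply ENNReal.ofReal_le_ofReal
    simp only [ENNReal.toReal_ofNat]
    have hrw : ∀ x : Sp N, ‖g x‖ ^ (2:ℝ) = ‖g x‖ ^ 2 := fun x => Real.rpow_two _
    simp_rw [hrw]
    calc (∫ x, ‖g x‖ ^ 2) ^ ((2:ℝ)⁻¹) ≤ (2 * sigmaNormSq u) ^ ((2:ℝ)⁻¹) :=
          Real.rpow_le_rpow (integral_nonneg fun x => sq_nonneg _) hintle (by norm_num)
      _ = Real.sqrt 2 * Real.sqrt (sigmaNormSq u) := by
          rw [show ((2:ℝ)⁻¹) = 1 / 2 by norm_num, ← Real.sqrt_eq_rpow,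
            Real.sqrt_mul (by norm_num)]
  calc eLpNorm u (ENNReal.ofReal (2 - 1 / N)) volume
      = eLpNorm (fun x => φ x • g x) (ENNReal.ofReal (2 - 1 / N)) volume :=
        eLpNorm_congr_ae (Eventually.of_forall fun x => (h_eq x).symm)
    _ ≤ eLpNorm φ (ENNReal.ofReal r) volume * eLpNorm g 2 volume := hHolder
    _ ≤ ENNReal.ofReal K * ENNReal.ofReal (Real.sqrt 2 * Real.sqrt (sigmaNormSq u)) :=
        mul_le_mul' (le_of_eq (ENNReal.ofReal_toReal hA).symm) hg2norm
    _ = ENNReal.ofReal (K * (Real.sqrt 2 * Real.sqrt (sigmaNormSq u))) :=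
        (ENNReal.ofReal_mul hK0).symm
    _ ≤ ENNReal.ofReal ((K * Real.sqrt 2 + 1) * Real.sqrt (sigmaNormSq u)) := by
        apply ENNReal.ofReal_le_ofReal
        have h1 := Real.sqrt_nonneg (sigmaNormSq u)
        nlinarith
end
end

section
/- Let N ≥ 1 and let V : ℝ^N → ℝ be of class C³ and bounded together with its derivatives up to order 3. Fix x₀, v₀ ∈ ℝ^N and for ε > 0 set u_{ε,0}(x) = e^{i x·v₀/ε} R((x−x₀)/ε), where R is the Gausson. Define m = ∫_{ℝ^N} R² dx, 𝓔(R) = ½∫|∇R|² dx − ∫R² log R² dx, and E_ε(u) = (1/(2ε^{N−2}))∫|∇u|² dx + ε^{−N}∫V|u|² dx − ε^{−N}∫|u|² log|u|² dx. Then there is a constant C > 0, independent of ε, such that for all ε ∈ (0,1]: |E_ε(u_{ε,0}) − 𝓔(R) − m(½|v₀|² + V(x₀))| ≤ C ε². -/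
open MeasureTheory Real Filter Topology
open scoped InnerProductSpace BigOperators

noncomputable section

variable {N : ℕ}

/-! ### Auxiliary lemmas for `stmt3` -/

section Stmt3Aux

variable {N : ℕ}

lemma aux_intg {b : ℝ} (hb : 0 < b) : Integrable (fun v : Sp N => rexp (-b * ‖v‖^2)) := by
  have h := (GaussianFourier.integrable_cexp_neg_mul_sq_norm_add (V := Sp N) (b := (b:ℂ))
    (by simpa using hb) 0 0).norm
  refine h.congr (Filter.Eventually.of_forall fun v => ?_)
  simp [Complex.norm_exp]
  left; norm_cast

lemma gausson_pos (x : Sp N) : 0 < gausson N x := by unfold gausson; positivity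

lemma gausson_neg (x : Sp N) : gausson N (-x) = gausson N x := by
  unfold gausson; rw [norm_neg]

lemma gausson_sq (x : Sp N) : gausson N x ^ 2 = rexp (1 + N) * rexp (-2 * ‖x‖^2) := by
  unfold gausson
  rw [mul_pow, ← Real.exp_nat_mul, ← Real.exp_nat_mul]
  ring_nf

lemma cont_gausson : Continuous (gausson N) := by unfold gausson; fun_prop

lemma int_R2 : Integrable (fun y : Sp N => gausson N y ^ 2) := by
  simp_rw [gausson_sq]
  exact (aux_intg (by norm_num)).const_mul _

lemma int_aux (p : Sp N → ℝ) (hc : Continuous p) (hp : ∀ y, |p y| ≤ rexp (‖y‖^2)) :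
    Integrable (fun y => p y * gausson N y ^ 2) := by
  refine ((aux_intg (b := 1) one_pos).const_mul (rexp (1+N))).mono
    ((hc.mul ((cont_gausson).pow 2)).aestronglyMeasurable)
    (Filter.Eventually.of_forall fun y => ?_)
  rw [Real.norm_eq_abs, Real.norm_eq_abs,
    abs_of_nonneg (by positivity : (0:ℝ) ≤ rexp (1+N) * rexp (-1*‖y‖^2)),
    abs_mul, gausson_sq, abs_of_nonneg (by positivity : (0:ℝ) ≤ rexp (1+N) * rexp (-2*‖y‖^2))]
  have h2 : rexp (‖y‖^2) * (rexp (1+N) * rexp (-2*‖y‖^2)) = rexp (1+N) * rexp (-1*‖y‖^2) := by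
    rw [← Real.exp_add, ← Real.exp_add, ← Real.exp_add]; ring_nf
  calc |p y| * (rexp (1+N) * rexp (-2*‖y‖^2))
      ≤ rexp (‖y‖^2) * (rexp (1+N) * rexp (-2*‖y‖^2)) := by
        have : (0:ℝ) < rexp (1+N) * rexp (-2*‖y‖^2) := by positivity
        nlinarith [hp y, abs_nonneg (p y)]
    _ = rexp (1+N) * rexp (-1*‖y‖^2) := h2

lemma int_norm_sq_R2 : Integrable (fun y : Sp N => ‖y‖^2 * gausson N y ^ 2) := by
  refine int_aux _ (continuous_norm.pow 2) fun y => ?_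
  rw [abs_of_nonneg (by positivity)]
  nlinarith [Real.add_one_le_exp (‖y‖^2), sq_nonneg ‖y‖]

lemma int_norm_R2 : Integrable (fun y : Sp N => ‖y‖ * gausson N y ^ 2) := by
  refine int_aux _ continuous_norm fun y => ?_
  rw [abs_of_nonneg (norm_nonneg y)]
  nlinarith [Real.add_one_le_exp (‖y‖^2), sq_nonneg (‖y‖ - 1), norm_nonneg y]

lemma hasFDerivAt_gausson (y : Sp N) :
    HasFDerivAt (gausson N) ((-(2 * gausson N y)) • innerSL ℝ y) y := by
  have h1 : HasFDerivAt (fun y : Sp N => ‖y‖^2) ((2:ℕ) • innerSL ℝ y) y :=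
    (hasStrictFDerivAt_norm_sq y).hasFDerivAt
  have h2 := (h1.fun_neg).exp
  have h3 := h2.const_mul (rexp ((1 + N) / 2))
  unfold gausson
  refine h3.congr_fderiv ?_
  ext z
  simp only [ContinuousLinearMap.smul_apply, ContinuousLinearMap.neg_apply, smul_eq_mul,
    ContinuousLinearMap.coe_smul, Pi.smul_apply, nsmul_eq_mul, Nat.cast_ofNat]
  ring

lemma pdR_gausson (j : Fin N) (y : Sp N) :
    pdR (gausson N) j y = -(2 * gausson N y) * y j := by
  rw [pdR, (hasFDerivAt_gausson y).fderiv]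
  simp [real_inner_comm, EuclideanSpace.inner_single_right]

lemma sum_sq_eq_norm_sq (y : Sp N) : ∑ j, y j ^ 2 = ‖y‖^2 := by
  exact (EuclideanSpace.real_norm_sq_eq y).symm

lemma gradSqR_gausson (y : Sp N) :
    gradSqR (gausson N) y = 4 * ‖y‖^2 * gausson N y ^ 2 := by
  unfold gradSqR
  simp_rw [pdR_gausson, mul_pow]
  rw [← Finset.mul_sum, sum_sq_eq_norm_sq]
  ring

lemma int_gradSqR : Integrable (gradSqR (gausson N)) := by
  have : gradSqR (gausson N) = fun y => 4 * (‖y‖^2 * gausson N y ^ 2) := by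
    funext y; rw [gradSqR_gausson]; ring
  rw [this]
  exact int_norm_sq_R2.const_mul 4

lemma pd_gaussonInit (x₀ v₀ : Sp N) {ε : ℝ} (j : Fin N) (x : Sp N) :
    pd (gaussonInit N x₀ v₀ ε) j x =
      Complex.exp (Complex.I * ((⟪x, v₀⟫_ℝ / ε : ℝ) : ℂ)) *
        (((ε⁻¹ * pdR (gausson N) j (ε⁻¹ • (x - x₀)) : ℝ) : ℂ) +
          ((gausson N (ε⁻¹ • (x - x₀)) * (ε⁻¹ * v₀ j) : ℝ) : ℂ) * Complex.I) := by
  set y := ε⁻¹ • (x - x₀) with hy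
  set M : Sp N →L[ℝ] ℂ := Complex.ofRealCLM.comp ((ε⁻¹ • innerSL ℝ v₀)) with hMdef
  have hM : ∀ z : Sp N, ((⟪z, v₀⟫_ℝ / ε : ℝ) : ℂ) = M z := fun z => by
    rw [hMdef]
    simp only [ContinuousLinearMap.comp_apply, ContinuousLinearMap.coe_smul, Pi.smul_apply,
      innerSL_apply_apply, Complex.ofRealCLM_apply, smul_eq_mul]
    rw [real_inner_comm, div_eq_inv_mul, ContinuousLinearMap.smul_apply, innerSL_apply_apply,
      smul_eq_mul]
  have hc : HasFDerivAt (fun z : Sp N => Complex.exp (Complex.I * ((⟪z, v₀⟫_ℝ / ε : ℝ) : ℂ)))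
      (Complex.exp (Complex.I * ((⟪x, v₀⟫_ℝ / ε : ℝ) : ℂ)) • ((Complex.I : ℂ) • M)) x := by
    have h2 := ((M.hasFDerivAt (x := x)).const_mul (Complex.I)).cexp
    simp_rw [← hM] at h2
    exact h2
  have hA : HasFDerivAt (fun z : Sp N => ε⁻¹ • (z - x₀))
      (ε⁻¹ • ContinuousLinearMap.id ℝ (Sp N)) x :=
    ((hasFDerivAt_id x).sub_const x₀).const_smul ε⁻¹
  have hg := (hasFDerivAt_gausson y).comp x hA
  have hd : HasFDerivAt (fun z : Sp N => ((gausson N (ε⁻¹ • (z - x₀)) : ℝ) : ℂ))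
      (Complex.ofRealCLM.comp ((((-(2 * gausson N y)) • innerSL ℝ y).comp
        (ε⁻¹ • ContinuousLinearMap.id ℝ (Sp N))))) x :=
    Complex.ofRealCLM.hasFDerivAt.comp x hg
  have hu := hc.fun_mul hd
  have heq : gaussonInit N x₀ v₀ ε = fun z : Sp N =>
      Complex.exp (Complex.I * ((⟪z, v₀⟫_ℝ / ε : ℝ) : ℂ)) *
        ((gausson N (ε⁻¹ • (z - x₀)) : ℝ) : ℂ) := rfl
  rw [pd, heq, hu.fderiv]
  simp only [ContinuousLinearMap.add_apply, ContinuousLinearMap.smul_apply,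
    ContinuousLinearMap.comp_apply, ContinuousLinearMap.coe_smul, Pi.smul_apply,
    ContinuousLinearMap.id_apply, innerSL_apply_apply, Complex.ofRealCLM_apply,
    EuclideanSpace.inner_single_right, conj_trivial, smul_eq_mul, Complex.real_smul,
    pdR_gausson]
  rw [hMdef]
  simp only [ContinuousLinearMap.comp_apply, Complex.ofRealCLM_apply,
    ContinuousLinearMap.smul_apply, innerSL_apply_apply, smul_eq_mul,
    EuclideanSpace.inner_single_right, conj_trivial, starRingEnd_apply, star_trivial,
    real_inner_smul_right, Complex.real_smul]
  push_cast
  ring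

lemma norm_exp_I_mul_ofReal (r : ℝ) : ‖Complex.exp (Complex.I * (r:ℂ))‖ = 1 := by
  simp [Complex.norm_exp]

lemma norm_pd_gaussonInit_sq (x₀ v₀ : Sp N) {ε : ℝ} (j : Fin N) (x : Sp N) :
    ‖pd (gaussonInit N x₀ v₀ ε) j x‖^2 =
      (ε⁻¹ * pdR (gausson N) j (ε⁻¹ • (x - x₀)))^2 +
        (gausson N (ε⁻¹ • (x - x₀)) * (ε⁻¹ * v₀ j))^2 := by
  rw [pd_gaussonInit x₀ v₀ j x, norm_mul, norm_exp_I_mul_ofReal, one_mul,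
    Complex.sq_norm, Complex.normSq_add_mul_I]

lemma gradSq_gaussonInit (x₀ v₀ : Sp N) {ε : ℝ} (x : Sp N) :
    gradSq (gaussonInit N x₀ v₀ ε) x =
      ε⁻¹^2 * (gradSqR (gausson N) (ε⁻¹ • (x - x₀)) +
        gausson N (ε⁻¹ • (x - x₀))^2 * ‖v₀‖^2) := by
  unfold gradSq gradSqR
  simp_rw [norm_pd_gaussonInit_sq x₀ v₀]
  rw [Finset.sum_add_distrib, mul_add]
  congr 1
  · simp_rw [mul_pow]
    rw [← Finset.mul_sum]
  · simp_rw [mul_pow]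
    rw [← Finset.mul_sum, ← Finset.mul_sum, sum_sq_eq_norm_sq]
    ring

lemma norm_gaussonInit_sq (x₀ v₀ : Sp N) {ε : ℝ} (x : Sp N) :
    ‖gaussonInit N x₀ v₀ ε x‖^2 = gausson N (ε⁻¹ • (x - x₀))^2 := by
  unfold gaussonInit
  rw [norm_mul, norm_exp_I_mul_ofReal, one_mul, Complex.norm_real, Real.norm_eq_abs,
    sq_abs]

lemma scale_int (F : Sp N → ℝ) (x₀ : Sp N) {ε : ℝ} (hε : 0 ≤ ε) :
    ∫ x : Sp N, F (ε⁻¹ • (x - x₀)) = ε ^ N * ∫ y, F y := by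
  rw [show (∫ x : Sp N, F (ε⁻¹ • (x - x₀))) =
      ∫ x : Sp N, (fun z => F (ε⁻¹ • z)) (x - x₀) from rfl,
    integral_sub_right_eq_self (fun z : Sp N => F (ε⁻¹ • z)) x₀,
    Measure.integral_comp_inv_smul_of_nonneg volume (fun y : Sp N => F y) hε]
  simp [finrank_euclideanSpace_fin]

lemma norm_fderiv_eq_iteratedFDeriv_one {F : Type*} [NormedAddCommGroup F] [NormedSpace ℝ F]
    (g : Sp N → F) (x : Sp N) :
    ‖fderiv ℝ g x‖ = ‖iteratedFDeriv ℝ 1 g x‖ := by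
  rw [show fderiv ℝ g x = continuousMultilinearCurryFin1 ℝ (Sp N) F (iteratedFDeriv ℝ 1 g x) by
      ext h
      simp only [continuousMultilinearCurryFin1_apply, iteratedFDeriv_one_apply]
      rfl,
    LinearIsometryEquiv.norm_map]

lemma taylor_bound {V : Sp N → ℝ} (hV : ContDiff ℝ 2 V) {B : ℝ}
    (hB : ∀ x, ‖iteratedFDeriv ℝ 2 V x‖ ≤ B) (x₀ h : Sp N) :
    |V (x₀ + h) - V x₀ - fderiv ℝ V x₀ h| ≤ B * ‖h‖^2 := by
  have hBpos : 0 ≤ B := le_trans (norm_nonneg _) (hB x₀)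
  have hd1 : ContDiff ℝ 1 (fderiv ℝ V) := hV.fderiv_right (by norm_num)
  have hlip : ∀ z : Sp N, ‖fderiv ℝ V z - fderiv ℝ V x₀‖ ≤ B * ‖z - x₀‖ := fun z => by
    refine (convex_univ).norm_image_sub_le_of_norm_fderiv_le
      (fun w _ => (hd1.differentiable one_ne_zero).differentiableAt) (fun w _ => ?_)
      (Set.mem_univ x₀) (Set.mem_univ z)
    rw [norm_fderiv_eq_iteratedFDeriv_one]
    rw [norm_iteratedFDeriv_fderiv]
    exact hB w
  have hball := (convex_closedBall x₀ ‖h‖).norm_image_sub_le_of_norm_fderiv_le'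
    (f := V) (φ := fderiv ℝ V x₀) (C := B * ‖h‖)
    (fun z _ => (hV.differentiable (by norm_num)).differentiableAt)
    (fun z hz => le_trans (hlip z) (by
      rw [Metric.mem_closedBall, dist_eq_norm] at hz
      exact mul_le_mul_of_nonneg_left hz hBpos))
    (x := x₀) (y := x₀ + h)
    (Metric.mem_closedBall_self (norm_nonneg h))
    (by rw [Metric.mem_closedBall, dist_eq_norm, add_sub_cancel_left])
  rw [add_sub_cancel_left] at hball
  calc |V (x₀ + h) - V x₀ - fderiv ℝ V x₀ h| ≤ B * ‖h‖ * ‖h‖ := hball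
    _ = B * ‖h‖^2 := by ring

end Stmt3Aux

set_option maxHeartbeats 2000000 in
/-- expansion of the energy of the Gausson-type initial datum. -/
theorem stmt3 (N : ℕ) (hN : 1 ≤ N) (V : Sp N → ℝ) (hV : BddDerivs N V 3)
    (x₀ v₀ : Sp N) :
    ∃ C : ℝ, 0 < C ∧ ∀ ε : ℝ, 0 < ε → ε ≤ 1 →
      |Eeps N V ε (gaussonInit N x₀ v₀ ε) - energyR N
          - massR N * ((1 / 2) * ‖v₀‖ ^ 2 + V x₀)| ≤ C * ε ^ 2 := by
  obtain ⟨hVs, hVb⟩ := hV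
  obtain ⟨B0, hB0⟩ := hVb 0 (by norm_num)
  obtain ⟨B2, hB2⟩ := hVb 2 (by norm_num)
  have hB0' : ∀ x, |V x| ≤ B0 := fun x => by
    have := hB0 x; rwa [norm_iteratedFDeriv_zero, Real.norm_eq_abs] at this
  have hB2nn : 0 ≤ B2 := le_trans (norm_nonneg _) (hB2 0)
  have hVc : Continuous V := hVs.continuous
  set K := ∫ y : Sp N, ‖y‖^2 * gausson N y ^ 2 with hKdef
  have hK0 : 0 ≤ K := integral_nonneg fun y => by positivity
  refine ⟨B2 * K + 1, by positivity, fun ε hε hε1 => ?_⟩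
  have hεne : ε ≠ 0 := ne_of_gt hε
  have hεN : (ε:ℝ) ^ N ≠ 0 := pow_ne_zero _ hεne
  set R : Sp N → ℝ := gausson N with hRdef
  set G := ∫ y : Sp N, gradSqR (gausson N) y with hGdef
  set m := massR N with hmdef
  set L := ∫ y : Sp N, gausson N y ^ 2 * Real.log (gausson N y ^ 2) with hLdef
  set ℓ := fderiv ℝ V x₀ with hldef
  -- the three integrals in Eeps
  have hgradInt : (∫ x, gradSq (gaussonInit N x₀ v₀ ε) x) =
      ε ^ N * (ε⁻¹^2 * (G + m * ‖v₀‖^2)) := by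
    calc (∫ x, gradSq (gaussonInit N x₀ v₀ ε) x)
        = ∫ x : Sp N, (fun y => ε⁻¹^2 * (gradSqR (gausson N) y + gausson N y ^2 * ‖v₀‖^2))
            (ε⁻¹ • (x - x₀)) := by
          congr 1; funext x; exact gradSq_gaussonInit x₀ v₀ x
      _ = ε ^ N * ∫ y : Sp N, ε⁻¹^2 * (gradSqR (gausson N) y + gausson N y ^2 * ‖v₀‖^2) :=
          scale_int (fun y => ε⁻¹^2 * (gradSqR (gausson N) y + gausson N y ^2 * ‖v₀‖^2)) x₀ hε.le
      _ = ε ^ N * (ε⁻¹^2 * (G + m * ‖v₀‖^2)) := by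
          congr 1
          rw [integral_const_mul]
          congr 1
          rw [integral_add int_gradSqR (int_R2.mul_const _), integral_mul_const]
          rfl
  have hVint : (∫ x, V x * ‖gaussonInit N x₀ v₀ ε x‖^2) =
      ε ^ N * ∫ y : Sp N, V (x₀ + ε • y) * gausson N y ^ 2 := by
    calc (∫ x, V x * ‖gaussonInit N x₀ v₀ ε x‖^2)
        = ∫ x : Sp N, (fun y => V (x₀ + ε • y) * gausson N y ^ 2) (ε⁻¹ • (x - x₀)) := by
          congr 1; funext x
          simp only
          rw [norm_gaussonInit_sq x₀ v₀ x]
          have h : x₀ + ε • ε⁻¹ • (x - x₀) = x := by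
            rw [smul_inv_smul₀ hεne]; abel
          rw [h]
      _ = ε ^ N * ∫ y : Sp N, V (x₀ + ε • y) * gausson N y ^ 2 :=
          scale_int (fun y => V (x₀ + ε • y) * gausson N y ^ 2) x₀ hε.le
  have hlogInt : (∫ x, logTerm (gaussonInit N x₀ v₀ ε) x) = ε ^ N * L := by
    calc (∫ x, logTerm (gaussonInit N x₀ v₀ ε) x)
        = ∫ x : Sp N, (fun y => gausson N y ^ 2 * Real.log (gausson N y ^ 2))
            (ε⁻¹ • (x - x₀)) := by
          congr 1; funext x
          unfold logTerm
          rw [norm_gaussonInit_sq x₀ v₀ x]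
      _ = ε ^ N * ∫ y : Sp N, gausson N y ^ 2 * Real.log (gausson N y ^ 2) :=
          scale_int (fun y => gausson N y ^ 2 * Real.log (gausson N y ^ 2)) x₀ hε.le
      _ = ε ^ N * L := by rw [hLdef]
  -- integrability of the V-integrand
  have hcontVy : Continuous (fun y : Sp N => V (x₀ + ε • y)) := by fun_prop
  have hFVint : Integrable (fun y : Sp N => V (x₀ + ε • y) * gausson N y ^ 2) :=
    int_R2.bdd_mul hcontVy.aestronglyMeasurable
      (Filter.Eventually.of_forall fun y => by rw [Real.norm_eq_abs]; exact hB0' _)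
  -- the energy identity
  have hEe : Eeps N V ε (gaussonInit N x₀ v₀ ε) - energyR N
      - massR N * ((1 / 2) * ‖v₀‖ ^ 2 + V x₀)
      = ∫ y : Sp N, (V (x₀ + ε • y) - V x₀) * gausson N y ^ 2 := by
    unfold Eeps energyR
    rw [hgradInt, hVint, hlogInt]
    have e1 : ε ^ 2 / (2 * ε ^ N) * (ε ^ N * (ε⁻¹ ^ 2 * (G + m * ‖v₀‖ ^ 2)))
        = (1/2) * G + m * ((1/2) * ‖v₀‖^2) := by
      field_simp
    have e2 : ((ε:ℝ) ^ N)⁻¹ * (ε ^ N * ∫ y : Sp N, V (x₀ + ε • y) * gausson N y ^ 2)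
        = ∫ y : Sp N, V (x₀ + ε • y) * gausson N y ^ 2 := by
      field_simp
    have e3 : ((ε:ℝ) ^ N)⁻¹ * (ε ^ N * L) = L := by field_simp
    rw [e1, e2, e3]
    have e4 : massR N * V x₀ = ∫ y : Sp N, V x₀ * gausson N y ^ 2 := by
      rw [integral_const_mul]; unfold massR; ring
    have e5 : (∫ y : Sp N, V (x₀ + ε • y) * gausson N y ^ 2)
        - ∫ y : Sp N, V x₀ * gausson N y ^ 2
        = ∫ y : Sp N, (V (x₀ + ε • y) - V x₀) * gausson N y ^ 2 := by
      rw [← integral_sub hFVint (int_R2.const_mul _)]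
      congr 1; funext y; ring
    have hG : (∫ x : Sp N, gradSqR (gausson N) x) = G := rfl
    have hL' : (∫ x : Sp N, gausson N x ^ 2 * Real.log (gausson N x ^ 2)) = L := rfl
    rw [hG, hL']
    rw [mul_add] at *
    rw [show massR N * ((1/2) * ‖v₀‖^2) + massR N * V x₀ = m * ((1/2) * ‖v₀‖^2) + massR N * V x₀
      from by rw [hmdef]]
    rw [e4]
    rw [← e5]
    ring
  rw [hEe]
  -- integrability of the linear term
  have hlinInt : Integrable (fun y : Sp N => ℓ (ε • y) * gausson N y ^ 2) := by
    refine (int_norm_R2.const_mul (‖ℓ‖ * ε)).mono ?_ (Filter.Eventually.of_forall fun y => ?_)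
    · exact ((ℓ.continuous.comp (continuous_const_smul ε)).mul
        ((cont_gausson).pow 2)).aestronglyMeasurable
    · rw [Real.norm_eq_abs, Real.norm_eq_abs, abs_mul,
        abs_of_nonneg (sq_nonneg (gausson N y)),
        abs_of_nonneg (by positivity : (0:ℝ) ≤ ‖ℓ‖ * ε * (‖y‖ * gausson N y ^ 2))]
      have h1 : |ℓ (ε • y)| ≤ ‖ℓ‖ * ε * ‖y‖ := by
        calc |ℓ (ε • y)| = ‖ℓ (ε • y)‖ := rfl
          _ ≤ ‖ℓ‖ * ‖ε • y‖ := ℓ.le_opNorm _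
          _ = ‖ℓ‖ * ε * ‖y‖ := by
              rw [norm_smul, Real.norm_eq_abs, abs_of_pos hε]; ring
      have h2 : (0:ℝ) ≤ gausson N y ^ 2 := sq_nonneg _
      nlinarith [abs_nonneg (ℓ (ε • y)), norm_nonneg y, norm_nonneg ℓ]
  -- the linear term has zero integral by oddness
  have hodd : (∫ y : Sp N, ℓ (ε • y) * gausson N y ^ 2) = 0 := by
    have h2 := integral_neg_eq_self (fun y : Sp N => ℓ (ε • y) * gausson N y ^ 2) volume
    have h3 : (∫ y : Sp N, ℓ (ε • -y) * gausson N (-y) ^ 2)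
        = ∫ y : Sp N, -(ℓ (ε • y) * gausson N y ^ 2) := by
      congr 1; funext y
      rw [smul_neg, map_neg, gausson_neg]; ring
    rw [h3, integral_neg] at h2
    linarith
  -- rewrite via second-order remainder
  have hsplit : (∫ y : Sp N, (V (x₀ + ε • y) - V x₀) * gausson N y ^ 2)
      = ∫ y : Sp N, (V (x₀ + ε • y) - V x₀ - ℓ (ε • y)) * gausson N y ^ 2 := by
    have hremInt : Integrable
        (fun y : Sp N => (V (x₀ + ε • y) - V x₀ - ℓ (ε • y)) * gausson N y ^ 2) := by
      have := (hFVint.sub (int_R2.const_mul (V x₀))).sub hlinInt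
      refine this.congr (Filter.Eventually.of_forall fun y => ?_)
      simp only [Pi.sub_apply]
      ring
    have : (fun y : Sp N => (V (x₀ + ε • y) - V x₀) * gausson N y ^ 2)
        = fun y => (V (x₀ + ε • y) - V x₀ - ℓ (ε • y)) * gausson N y ^ 2
            + ℓ (ε • y) * gausson N y ^ 2 := by
      funext y; ring
    rw [this, integral_add hremInt hlinInt, hodd, add_zero]
  rw [hsplit]
  -- pointwise Taylor bound
  have htay : ∀ y : Sp N,
      |(V (x₀ + ε • y) - V x₀ - ℓ (ε • y)) * gausson N y ^ 2|
        ≤ B2 * ε^2 * (‖y‖^2 * gausson N y ^ 2) := fun y => by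
    rw [abs_mul, abs_of_nonneg (sq_nonneg (gausson N y))]
    have h1 := taylor_bound (hVs.of_le (by norm_num)) hB2 x₀ (ε • y)
    rw [← hldef] at h1
    have h2 : ‖ε • y‖^2 = ε^2 * ‖y‖^2 := by
      rw [norm_smul, Real.norm_eq_abs, abs_of_pos hε, mul_pow]
    rw [h2] at h1
    have h3 : (0:ℝ) ≤ gausson N y ^ 2 := sq_nonneg _
    nlinarith [abs_nonneg (V (x₀ + ε • y) - V x₀ - ℓ (ε • y)), sq_nonneg ‖y‖]
  -- conclude
  have hmaj : Integrable (fun y : Sp N => B2 * ε^2 * (‖y‖^2 * gausson N y ^ 2)) :=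
    int_norm_sq_R2.const_mul _
  calc |∫ y : Sp N, (V (x₀ + ε • y) - V x₀ - ℓ (ε • y)) * gausson N y ^ 2|
      ≤ ∫ y : Sp N, |(V (x₀ + ε • y) - V x₀ - ℓ (ε • y)) * gausson N y ^ 2| := by
        exact norm_integral_le_integral_norm
          (fun y : Sp N => (V (x₀ + ε • y) - V x₀ - ℓ (ε • y)) * gausson N y ^ 2)
    _ ≤ ∫ y : Sp N, B2 * ε^2 * (‖y‖^2 * gausson N y ^ 2) := by
        refine integral_mono_of_nonneg (Filter.Eventually.of_forall fun y => abs_nonneg _)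
          hmaj (Filter.Eventually.of_forall fun y => htay y)
    _ = B2 * ε^2 * K := by rw [integral_const_mul, hKdef]
    _ ≤ (B2 * K + 1) * ε ^ 2 := by nlinarith [sq_nonneg ε, hε.le]
end
end

section
/- Let N ≥ 1, x₀, v₀ ∈ ℝ^N, and for ε > 0 set u_{ε,0}(x) = e^{i x·v₀/ε} R((x−x₀)/ε) and m = ∫_{ℝ^N} R² dx. Then: (i) for every ε > 0, ε^{1−N} ∫_{ℝ^N} Im( conj(u_{ε,0}(x)) · ∇u_{ε,0}(x) ) dx = m v₀; (ii) if V : ℝ^N → ℝ is of class C³ and bounded together with its derivatives up to order 3, and χ ∈ C^∞(ℝ^N) satisfies 0 ≤ χ ≤ 1, χ(x) = 1 for |x| < ρ and χ(x) = 0 for |x| > 2ρ, where ρ > |x₀|, then there is C > 0 such that for all ε ∈ (0,1]: | m V(x₀) − ε^{−N} ∫_{ℝ^N} χ(x) V(x) |u_{ε,0}(x)|² dx | ≤ C ε². -/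
open MeasureTheory Real Filter Topology
open scoped InnerProductSpace BigOperators

noncomputable section

variable {N : ℕ}

theorem hasFDerivAt_u (x₀ v₀ : Sp N) (ε : ℝ) (x : Sp N) :
    HasFDerivAt (gaussonInit N x₀ v₀ ε)
      ((Complex.exp (Complex.I * ((⟪x, v₀⟫_ℝ / ε : ℝ) : ℂ))
          • (Complex.ofRealCLM.comp (fderiv ℝ (fun y : Sp N => gausson N (ε⁻¹ • (y - x₀))) x)))
        + ((gausson N (ε⁻¹ • (x - x₀)) : ℂ)
          • (Complex.exp (Complex.I * ((⟪x, v₀⟫_ℝ / ε : ℝ) : ℂ))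
            • (Complex.I • (Complex.ofRealCLM.comp (ε⁻¹ • (innerSL ℝ v₀))))))) x := by
  have hc : HasFDerivAt (fun x : Sp N => (⟪x, v₀⟫_ℝ / ε : ℝ)) (ε⁻¹ • (innerSL ℝ v₀)) x := by
    have h : (fun x : Sp N => (⟪x, v₀⟫_ℝ / ε : ℝ)) = fun x => ε⁻¹ • (innerSL ℝ v₀ x) := by
      funext y; simp [real_inner_comm, div_eq_inv_mul, mul_comm]
    rw [h]; exact (innerSL ℝ v₀).hasFDerivAt.const_smul ε⁻¹
  have hm : HasFDerivAt (fun x : Sp N => Complex.I * ((⟪x, v₀⟫_ℝ / ε : ℝ) : ℂ))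
      (Complex.I • (Complex.ofRealCLM.comp (ε⁻¹ • (innerSL ℝ v₀)))) x :=
    (Complex.ofRealCLM.hasFDerivAt.comp x hc).const_mul Complex.I
  have hS : HasFDerivAt (fun y : Sp N => gausson N (ε⁻¹ • (y - x₀)))
      (fderiv ℝ (fun y : Sp N => gausson N (ε⁻¹ • (y - x₀))) x) x := by
    have : ContDiff ℝ ⊤ (fun y : Sp N => gausson N (ε⁻¹ • (y - x₀))) :=
      (contDiff_const.mul (((contDiff_norm_sq ℝ).neg).exp)).comp
        ((contDiff_id.sub contDiff_const).const_smul ε⁻¹)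
    exact (this.differentiable (by simp) x).hasFDerivAt
  exact hm.cexp.mul (Complex.ofRealCLM.hasFDerivAt.comp x hS)


theorem im_eq (x₀ v₀ : Sp N) (ε : ℝ) (j : Fin N) (x : Sp N) :
    ((starRingEnd ℂ) (gaussonInit N x₀ v₀ ε x) * pd (gaussonInit N x₀ v₀ ε) j x).im
      = gausson N (ε⁻¹ • (x - x₀)) ^ 2 * (ε⁻¹ * v₀ j) := by
  have hpd : pd (gaussonInit N x₀ v₀ ε) j x
      = Complex.exp (Complex.I * ((⟪x, v₀⟫_ℝ / ε : ℝ) : ℂ))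
          * ((fderiv ℝ (fun y : Sp N => gausson N (ε⁻¹ • (y - x₀))) x (EuclideanSpace.single j 1) : ℝ) : ℂ)
        + (gausson N (ε⁻¹ • (x - x₀)) : ℂ)
          * (Complex.exp (Complex.I * ((⟪x, v₀⟫_ℝ / ε : ℝ) : ℂ))
            * (Complex.I * ((ε⁻¹ * v₀ j : ℝ) : ℂ))) := by
    rw [pd, (hasFDerivAt_u x₀ v₀ ε x).fderiv]
    simp [EuclideanSpace.inner_single_right, smul_eq_mul]
  set t : ℝ := ⟪x, v₀⟫_ℝ / ε
  set S : ℝ := gausson N (ε⁻¹ • (x - x₀))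
  set d : ℝ := fderiv ℝ (fun y : Sp N => gausson N (ε⁻¹ • (y - x₀))) x (EuclideanSpace.single j 1)
  set r : ℝ := ε⁻¹ * v₀ j
  rw [hpd]
  show ((starRingEnd ℂ) (Complex.exp (Complex.I * (t:ℂ)) * (S:ℂ)) *
      ((Complex.exp (Complex.I * (t:ℂ)) * (d:ℂ)) +
        (S:ℂ) * (Complex.exp (Complex.I * (t:ℂ)) * (Complex.I * (r:ℂ))))).im = S^2 * r
  have h1 : (starRingEnd ℂ) (Complex.exp (Complex.I * (t:ℂ))) * Complex.exp (Complex.I * (t:ℂ)) = 1 := by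
    rw [← Complex.exp_conj, ← Complex.exp_add]; simp
  have key : ((starRingEnd ℂ) (Complex.exp (Complex.I * (t:ℂ))) * Complex.exp (Complex.I * (t:ℂ)))
      * ((S:ℂ) * ((d:ℂ) + (S:ℂ) * (Complex.I * (r:ℂ)))) = ((starRingEnd ℂ) (Complex.exp (Complex.I * (t:ℂ)) * (S:ℂ)) *
      ((Complex.exp (Complex.I * (t:ℂ)) * (d:ℂ)) +
        (S:ℂ) * (Complex.exp (Complex.I * (t:ℂ)) * (Complex.I * (r:ℂ))))) := by
    simp [map_mul, Complex.conj_ofReal]; ring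
  rw [← key, h1, one_mul]
  simp [Complex.mul_im]
  ring


theorem part1 (x₀ v₀ : Sp N) (ε : ℝ) (hε : 0 < ε) (j : Fin N) :
    (ε / ε ^ N) * ∫ x, ((starRingEnd ℂ) (gaussonInit N x₀ v₀ ε x)
        * pd (gaussonInit N x₀ v₀ ε) j x).im = massR N * v₀ j := by
  have hint : (∫ x : Sp N, gausson N (ε⁻¹ • (x - x₀)) ^ 2) = ε ^ N * massR N := by
    have h1 : (∫ x : Sp N, gausson N (ε⁻¹ • (x - x₀)) ^ 2)
        = ∫ x : Sp N, gausson N (ε⁻¹ • x) ^ 2 :=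
      integral_sub_right_eq_self (fun y : Sp N => gausson N (ε⁻¹ • y) ^ 2) x₀
    have h2 : (∫ x : Sp N, gausson N (ε⁻¹ • x) ^ 2)
        = ε ^ (Module.finrank ℝ (Sp N)) • ∫ x : Sp N, gausson N x ^ 2 :=
      MeasureTheory.Measure.integral_comp_inv_smul_of_nonneg volume
        (fun y : Sp N => gausson N y ^ 2) hε.le
    rw [h1, h2, finrank_euclideanSpace_fin, smul_eq_mul, massR]
  have h0 : (∫ x, ((starRingEnd ℂ) (gaussonInit N x₀ v₀ ε x)
      * pd (gaussonInit N x₀ v₀ ε) j x).im)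
      = (∫ x : Sp N, gausson N (ε⁻¹ • (x - x₀)) ^ 2) * (ε⁻¹ * v₀ j) := by
    simp_rw [im_eq x₀ v₀ ε j]
    exact integral_mul_const _ _
  rw [h0, hint]
  have hεn : (ε : ℝ) ^ N ≠ 0 := pow_ne_zero _ hε.ne'
  field_simp

theorem integrable_gauss (b : ℝ) (hb : 0 < b) :
    Integrable (fun z : Sp N => Real.exp (-b * ‖z‖ ^ 2)) := by
  have h := (GaussianFourier.integrable_cexp_neg_mul_sq_norm_add (V := Sp N)
    (b := (b : ℂ)) (by simpa using hb) 0 0).norm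
  refine h.congr ?_
  filter_upwards with z
  rw [Complex.norm_exp]
  simp [← Complex.ofReal_pow]


theorem gausson_contDiff : ContDiff ℝ ⊤ (gausson N) :=
  contDiff_const.mul (((contDiff_norm_sq ℝ).neg).exp)


theorem gausson_sq_eq (z : Sp N) :
    gausson N z ^ 2 = Real.exp ((1 + N)) * Real.exp (-2 * ‖z‖ ^ 2) := by
  rw [gausson, mul_pow, ← Real.exp_nat_mul, ← Real.exp_nat_mul]
  push_cast
  ring_nf


theorem integrable_gausson_sq : Integrable (fun z : Sp N => gausson N z ^ 2) := by
  simp_rw [gausson_sq_eq]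
  exact (integrable_gauss 2 two_pos).const_mul _


theorem gausson_nonneg (z : Sp N) : 0 ≤ gausson N z :=
  mul_nonneg (Real.exp_nonneg _) (Real.exp_nonneg _)

/-- integrability of continuous functions dominated by `c * exp(-‖z‖²)` -/

theorem integrable_of_le_gauss {f : Sp N → ℝ} (hf : Continuous f) (c : ℝ)
    (h : ∀ z, |f z| ≤ c * Real.exp (-‖z‖ ^ 2)) : Integrable f := by
  refine ((integrable_gauss 1 one_pos).const_mul c).mono' hf.aestronglyMeasurable ?_
  filter_upwards with z
  simpa using h z


theorem sq_gauss_le (t : ℝ) : t ^ 2 * Real.exp (-2 * t ^ 2) ≤ Real.exp (-t ^ 2) := by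
  have h1 : t ^ 2 + 1 ≤ Real.exp (t ^ 2) := Real.add_one_le_exp _
  have h2 : Real.exp (-2 * t ^ 2) * Real.exp (t ^ 2) = Real.exp (-t ^ 2) := by
    rw [← Real.exp_add]; ring_nf
  nlinarith [Real.exp_pos (-2 * t ^ 2), Real.exp_pos (-t ^ 2), sq_nonneg t]


theorem integrable_normsq_gausson_sq :
    Integrable (fun z : Sp N => ‖z‖ ^ 2 * gausson N z ^ 2) := by
  refine integrable_of_le_gauss
    (continuous_norm.pow 2 |>.mul (gausson_contDiff.continuous.pow 2)) (Real.exp (1 + N)) ?_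
  intro z
  rw [abs_of_nonneg (by positivity), gausson_sq_eq]
  calc ‖z‖ ^ 2 * (Real.exp (1 + N) * Real.exp (-2 * ‖z‖ ^ 2))
      = Real.exp (1 + N) * (‖z‖ ^ 2 * Real.exp (-2 * ‖z‖ ^ 2)) := by ring
    _ ≤ Real.exp (1 + N) * Real.exp (-‖z‖ ^ 2) := by
        have := sq_gauss_le ‖z‖
        exact mul_le_mul_of_nonneg_left this (Real.exp_nonneg _)


theorem odd_zero (L : Sp N →L[ℝ] ℝ) : ∫ z : Sp N, L z * gausson N z ^ 2 = 0 := by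
  have h := integral_neg_eq_self (fun z : Sp N => L z * gausson N z ^ 2) volume
  have h2 : (∫ z : Sp N, L (-z) * gausson N (-z) ^ 2) = - ∫ z : Sp N, L z * gausson N z ^ 2 := by
    rw [← integral_neg]
    congr 1; funext z
    simp [gausson, map_neg]
  rw [h2] at h
  linarith

theorem taylor2 {g : Sp N → ℝ} (hg : ContDiff ℝ 2 g) {M : ℝ} (hM0 : 0 ≤ M)
    (hM : ∀ x, ‖fderiv ℝ (fderiv ℝ g) x‖ ≤ M) (x₀ h : Sp N) :
    |g (x₀ + h) - g x₀ - fderiv ℝ g x₀ h| ≤ M * ‖h‖ ^ 2 := by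
  have hg1 : ContDiff ℝ 1 (fderiv ℝ g) := hg.fderiv_right (by norm_num)
  have hlip : LipschitzWith ⟨M, hM0⟩ (fderiv ℝ g) := by
    refine lipschitzWith_of_nnnorm_fderiv_le (hg1.differentiable one_ne_zero) (fun x => ?_)
    exact NNReal.coe_le_coe.mp (hM x)
  have key := Convex.norm_image_sub_le_of_norm_hasFDerivWithin_le'
    (f := g) (f' := fun x => fderiv ℝ g x) (φ := fderiv ℝ g x₀) (C := M * ‖h‖)
    (s := Metric.closedBall x₀ ‖h‖)
    (fun x _ => ((hg.differentiable (by norm_num)) x).hasFDerivAt.hasFDerivWithinAt)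
    (fun x hx => by
      have h1 := hlip.dist_le_mul x x₀
      rw [dist_eq_norm, dist_eq_norm] at h1
      have h2 : ‖x - x₀‖ ≤ ‖h‖ := by
        simpa [dist_eq_norm] using Metric.mem_closedBall.mp hx
      calc ‖fderiv ℝ g x - fderiv ℝ g x₀‖ ≤ M * ‖x - x₀‖ := h1
        _ ≤ M * ‖h‖ := by nlinarith)
    (convex_closedBall x₀ ‖h‖)
    (Metric.mem_closedBall_self (norm_nonneg h))
    (y := x₀ + h) (by simp [Metric.mem_closedBall, dist_eq_norm])
  rw [add_sub_cancel_left] at key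
  calc |g (x₀ + h) - g x₀ - fderiv ℝ g x₀ h| ≤ M * ‖h‖ * ‖h‖ := key
    _ = M * ‖h‖ ^ 2 := by ring


theorem cov (g : Sp N → ℝ) (x₀ : Sp N) {ε : ℝ} (hε : 0 < ε) :
    (ε ^ N)⁻¹ * ∫ x : Sp N, g x * gausson N (ε⁻¹ • (x - x₀)) ^ 2
      = ∫ z : Sp N, g (x₀ + ε • z) * gausson N z ^ 2 := by
  have h1 : (∫ x : Sp N, g x * gausson N (ε⁻¹ • (x - x₀)) ^ 2)
      = ∫ x : Sp N, g (x₀ + x) * gausson N (ε⁻¹ • x) ^ 2 := by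
    rw [← integral_add_left_eq_self
      (fun x : Sp N => g x * gausson N (ε⁻¹ • (x - x₀)) ^ 2) x₀]
    congr 1; funext x; rw [add_sub_cancel_left]
  have h2 : (∫ x : Sp N, (fun y : Sp N => g (x₀ + ε • y) * gausson N y ^ 2) (ε⁻¹ • x))
      = (ε ^ N) • ∫ z : Sp N, g (x₀ + ε • z) * gausson N z ^ 2 := by
    have h := MeasureTheory.Measure.integral_comp_inv_smul_of_nonneg volume
      (fun y : Sp N => g (x₀ + ε • y) * gausson N y ^ 2) hε.le
    rwa [finrank_euclideanSpace_fin] at h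
  have h3 : ∀ x : Sp N, (fun y : Sp N => g (x₀ + ε • y) * gausson N y ^ 2) (ε⁻¹ • x)
      = g (x₀ + x) * gausson N (ε⁻¹ • x) ^ 2 := by
    intro x; simp [smul_inv_smul₀ hε.ne']
  simp_rw [h3] at h2
  rw [h1, h2, smul_eq_mul, ← mul_assoc, inv_mul_cancel₀ (pow_ne_zero _ hε.ne'), one_mul]

theorem norm_u_sq (x₀ v₀ : Sp N) (ε : ℝ) (x : Sp N) :
    ‖gaussonInit N x₀ v₀ ε x‖ ^ 2 = gausson N (ε⁻¹ • (x - x₀)) ^ 2 := by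
  rw [gaussonInit, norm_mul, Complex.norm_exp]
  simp [sq_abs]

theorem bound_fderiv2 {E : Type*} [NormedAddCommGroup E] [NormedSpace ℝ E] {g : E → ℝ}
    (hgc : HasCompactSupport g) (hc : Continuous (fderiv ℝ (fderiv ℝ g))) :
    ∃ C, ∀ x, ‖fderiv ℝ (fderiv ℝ g) x‖ ≤ C := by
  obtain ⟨C, hC⟩ := hgc.isCompact.exists_bound_of_continuousOn
    (f := fderiv ℝ (fderiv ℝ g)) hc.continuousOn
  refine ⟨max C 0, fun x => ?_⟩
  by_cases hx : x ∈ tsupport g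
  · exact (hC x hx).trans (le_max_left _ _)
  · have hx' : x ∉ tsupport (fderiv ℝ g) := fun h => hx (tsupport_fderiv_subset ℝ h)
    rw [fderiv_of_notMem_tsupport ℝ hx', ContinuousLinearMap.opNorm_zero]
    exact le_max_right _ _

set_option maxHeartbeats 1000000 in
theorem part2 (x₀ v₀ : Sp N) (V : Sp N → ℝ) (hV : BddDerivs N V 3)
    (ρ : ℝ) (hρ : ‖x₀‖ < ρ) (χ : Sp N → ℝ) (hχsm : ContDiff ℝ (⊤ : ℕ∞) χ)
    (hχ0 : ∀ x, 0 ≤ χ x) (hχ1 : ∀ x, χ x ≤ 1)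
    (hχa : ∀ x, ‖x‖ < ρ → χ x = 1) (hχb : ∀ x, 2 * ρ < ‖x‖ → χ x = 0) :
    ∃ C : ℝ, 0 < C ∧ ∀ ε : ℝ, 0 < ε → ε ≤ 1 →
      |massR N * V x₀ - (ε ^ N)⁻¹ *
          ∫ x, χ x * V x * ‖gaussonInit N x₀ v₀ ε x‖ ^ 2| ≤ C * ε ^ 2 := by
  obtain ⟨hVc, -⟩ := hV
  set g : Sp N → ℝ := fun x => χ x * V x with hgdef
  have hg3 : ContDiff ℝ 3 g := (hχsm.of_le (by norm_cast)).mul (by exact_mod_cast hVc)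
  have hχc : HasCompactSupport χ := by
    apply HasCompactSupport.intro (isCompact_closedBall (0 : Sp N) (2 * ρ))
    intro x hx
    apply hχb
    simpa only [Metric.mem_closedBall, dist_zero_right, not_le] using hx
  have hgc : HasCompactSupport g := hχc.mul_right
  have hgcont : Continuous g := hg3.continuous
  obtain ⟨B, hB⟩ := hgcont.bounded_above_of_compact_support hgc
  have hB0 : 0 ≤ B := (norm_nonneg (g 0)).trans (hB 0)
  have hg1 : ContDiff ℝ 1 (fderiv ℝ g) := hg3.fderiv_right (by norm_num)
  have hg''cont : Continuous (fderiv ℝ (fderiv ℝ g)) :=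
    (hg1.fderiv_right (m := 0) (by norm_num)).continuous
  obtain ⟨M', hM'⟩ := bound_fderiv2 hgc hg''cont
  set M := max M' 0 with hMdef
  have hM0 : 0 ≤ M := le_max_right _ _
  have hM : ∀ x, ‖fderiv ℝ (fderiv ℝ g) x‖ ≤ M := fun x => (hM' x).trans (le_max_left _ _)
  set L : Sp N →L[ℝ] ℝ := fderiv ℝ g x₀ with hLdef
  set J : ℝ := ∫ z : Sp N, ‖z‖ ^ 2 * gausson N z ^ 2 with hJdef
  have hJ0 : 0 ≤ J := integral_nonneg fun z => by positivity
  refine ⟨M * J + 1, by positivity, ?_⟩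
  intro ε hε hε1
  have hrw : (∫ x, χ x * V x * ‖gaussonInit N x₀ v₀ ε x‖ ^ 2)
      = ∫ x : Sp N, g x * gausson N (ε⁻¹ • (x - x₀)) ^ 2 := by
    congr 1; funext x; rw [norm_u_sq]
  rw [hrw, cov g x₀ hε]
  have hmass : massR N * V x₀ = ∫ z : Sp N, g x₀ * gausson N z ^ 2 := by
    have hgx0 : g x₀ = V x₀ := by rw [hgdef]; simp [hχa x₀ hρ]
    rw [integral_const_mul, hgx0]
    exact mul_comm _ _
  rw [hmass]
  -- pointwise Taylor bound
  set φ : Sp N → ℝ := fun z => (g x₀ - g (x₀ + ε • z) + L (ε • z)) * gausson N z ^ 2 with hφdef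
  have hptw : ∀ z, |φ z| ≤ M * ε ^ 2 * (‖z‖ ^ 2 * gausson N z ^ 2) := by
    intro z
    have ht := taylor2 (hg3.of_le (by norm_num)) hM0 hM x₀ (ε • z)
    have hns : ‖ε • z‖ ^ 2 = ε ^ 2 * ‖z‖ ^ 2 := by
      rw [norm_smul, Real.norm_eq_abs, mul_pow, sq_abs]
    rw [hns] at ht
    have habs : |g x₀ - g (x₀ + ε • z) + L (ε • z)|
        = |g (x₀ + ε • z) - g x₀ - L (ε • z)| := by rw [← abs_neg]; ring_nf
    rw [hφdef]
    simp only
    rw [abs_mul, abs_of_nonneg (by positivity : (0:ℝ) ≤ gausson N z ^ 2), habs]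
    have hg2 : 0 ≤ gausson N z ^ 2 := by positivity
    nlinarith [ht, hg2, sq_nonneg ‖z‖]
  -- integrabilities
  have hcshift : Continuous fun z : Sp N => g (x₀ + ε • z) :=
    hgcont.comp (continuous_const.add (continuous_id.const_smul ε))
  have hgausscont : Continuous (gausson N) := gausson_contDiff.continuous
  have hI0 : Integrable fun z : Sp N => g x₀ * gausson N z ^ 2 :=
    integrable_gausson_sq.const_mul _
  have hI1 : Integrable fun z : Sp N => g (x₀ + ε • z) * gausson N z ^ 2 := by
    apply integrable_of_le_gauss (hcshift.mul (hgausscont.pow 2)) (B * Real.exp (1 + N))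
    intro z
    show |g (x₀ + ε • z) * gausson N z ^ 2| ≤ _
    rw [abs_mul, abs_of_nonneg (by positivity : (0:ℝ) ≤ gausson N z ^ 2), gausson_sq_eq]
    have h1 : |g (x₀ + ε • z)| ≤ B := hB _
    have h2 : Real.exp (-2 * ‖z‖ ^ 2) ≤ Real.exp (-‖z‖ ^ 2) :=
      Real.exp_le_exp.mpr (by nlinarith [sq_nonneg ‖z‖])
    have h3 : (0:ℝ) < Real.exp (1 + N) := Real.exp_pos _
    calc |g (x₀ + ε • z)| * (Real.exp (1 + N) * Real.exp (-2 * ‖z‖ ^ 2))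
        ≤ B * (Real.exp (1 + N) * Real.exp (-‖z‖ ^ 2)) := by
          refine mul_le_mul h1 (mul_le_mul_of_nonneg_left h2 h3.le) (by positivity) hB0
      _ = B * Real.exp (1 + N) * Real.exp (-‖z‖ ^ 2) := by ring
  have hI2 : Integrable fun z : Sp N => L (ε • z) * gausson N z ^ 2 := by
    refine ((integrable_gausson_sq.add integrable_normsq_gausson_sq).const_mul ‖L‖).mono'
      ((L.continuous.comp (continuous_id.const_smul ε)).mul
        (hgausscont.pow 2)).aestronglyMeasurable ?_
    filter_upwards with z
    simp only [Pi.add_apply]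
    rw [Real.norm_eq_abs, abs_mul, abs_of_nonneg (by positivity : (0:ℝ) ≤ gausson N z ^ 2)]
    have h1 : |L (ε • z)| ≤ ‖L‖ * ‖ε • z‖ := L.le_opNorm _
    have h2 : ‖ε • z‖ = |ε| * ‖z‖ := by rw [norm_smul, Real.norm_eq_abs]
    have h3 : |ε| ≤ 1 := by rw [abs_of_pos hε]; exact hε1
    have h4 : ‖z‖ ≤ 1 + ‖z‖ ^ 2 := by nlinarith [sq_nonneg (‖z‖ - 1)]
    have h5 : (0:ℝ) ≤ gausson N z ^ 2 := by positivity
    have h6 : (0:ℝ) ≤ ‖L‖ := norm_nonneg _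
    have h7 : (0:ℝ) ≤ ‖z‖ := norm_nonneg _
    have h8 : |L (ε • z)| ≤ ‖L‖ * ‖z‖ := by
      rw [h2] at h1
      refine h1.trans ?_
      nlinarith [mul_nonneg (mul_nonneg h6 h7) (sub_nonneg.mpr h3)]
    nlinarith [mul_le_mul_of_nonneg_right h8 h5,
      mul_le_mul_of_nonneg_left (mul_le_mul_of_nonneg_right h4 h5) h6]
  have hIφ : Integrable φ := by
    have : φ = fun z => (g x₀ * gausson N z ^ 2 - g (x₀ + ε • z) * gausson N z ^ 2)
        + L (ε • z) * gausson N z ^ 2 := by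
      funext z; rw [hφdef]; ring
    rw [this]
    exact (hI0.sub hI1).add hI2
  have hzero : (∫ z : Sp N, L (ε • z) * gausson N z ^ 2) = 0 := by
    have heq : ∀ z : Sp N, L (ε • z) * gausson N z ^ 2 = ε * (L z * gausson N z ^ 2) := by
      intro z
      have hLz : L (ε • z) = ε * L z := by
        rw [ContinuousLinearMap.map_smul, smul_eq_mul]
      rw [hLz]; ring
    simp_rw [heq]
    rw [integral_const_mul, odd_zero, mul_zero]
  have hsplit : (∫ z : Sp N, g x₀ * gausson N z ^ 2)
      - (∫ z : Sp N, g (x₀ + ε • z) * gausson N z ^ 2) = ∫ z, φ z := by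
    have : (fun z : Sp N => φ z) = fun z => (g x₀ * gausson N z ^ 2
        - g (x₀ + ε • z) * gausson N z ^ 2) + L (ε • z) * gausson N z ^ 2 := by
      funext z; rw [hφdef]; ring
    have hIsub : Integrable (fun z : Sp N => g x₀ * gausson N z ^ 2
        - g (x₀ + ε • z) * gausson N z ^ 2) := hI0.sub hI1
    rw [this, integral_add hIsub hI2, integral_sub hI0 hI1, hzero, add_zero]
  rw [hsplit]
  calc |∫ z, φ z| ≤ ∫ z, |φ z| := by
        simpa [Real.norm_eq_abs] using norm_integral_le_integral_norm φ
    _ ≤ ∫ z : Sp N, M * ε ^ 2 * (‖z‖ ^ 2 * gausson N z ^ 2) := by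
        refine integral_mono hIφ.abs (integrable_normsq_gausson_sq.const_mul _) ?_
        intro z; exact hptw z
    _ = M * ε ^ 2 * J := by rw [integral_const_mul]
    _ ≤ (M * J + 1) * ε ^ 2 := by nlinarith [sq_nonneg ε]

/-- momentum and localized potential energy of the initial datum. -/
theorem stmt4 (N : ℕ) (hN : 1 ≤ N) (x₀ v₀ : Sp N) :
    (∀ ε : ℝ, 0 < ε → ∀ j : Fin N,
      (ε / ε ^ N) * ∫ x, ((starRingEnd ℂ) (gaussonInit N x₀ v₀ ε x)
          * pd (gaussonInit N x₀ v₀ ε) j x).im = massR N * v₀ j) ∧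
    (∀ V : Sp N → ℝ, BddDerivs N V 3 →
      ∀ ρ : ℝ, ‖x₀‖ < ρ →
      ∀ χ : Sp N → ℝ, ContDiff ℝ (⊤ : ℕ∞) χ →
        (∀ x, 0 ≤ χ x) → (∀ x, χ x ≤ 1) →
        (∀ x, ‖x‖ < ρ → χ x = 1) → (∀ x, 2 * ρ < ‖x‖ → χ x = 0) →
        ∃ C : ℝ, 0 < C ∧ ∀ ε : ℝ, 0 < ε → ε ≤ 1 →
          |massR N * V x₀ - (ε ^ N)⁻¹ *
              ∫ x, χ x * V x * ‖gaussonInit N x₀ v₀ ε x‖ ^ 2| ≤ C * ε ^ 2) := by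
  constructor
  · intro ε hε j
    exact part1 x₀ v₀ ε hε j
  · intro V hV ρ hρ χ hχsm hχ0 hχ1 hχa hχb
    exact part2 x₀ v₀ V hV ρ hρ χ hχsm hχ0 hχ1 hχa hχb
end
end

section
/- Let N ≥ 1 and let R be the Gausson. Let ψ : ℝ^N → ℂ be a Σ-class function with ∫|ψ|² dx = ∫R² dx, and suppose that inf_{y ∈ ℝ^N, θ ∈ [0,2π)} ‖ψ − e^{−iθ} R(·+y)‖_{L²} ≤ ‖R‖_{L²}. Then the infimum is attained: there exist y₀ ∈ ℝ^N and θ₀ ∈ [0,2π) with ‖ψ − e^{−iθ₀} R(·+y₀)‖_{L²} = inf_{y ∈ ℝ^N, θ ∈ [0,2π)} ‖ψ − e^{−iθ} R(·+y)‖_{L²}. -/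
open MeasureTheory Real Filter Topology
open scoped InnerProductSpace BigOperators

noncomputable section

variable {N : ℕ}

lemma g_cont (N : ℕ) : Continuous (gausson N) := by
  unfold gausson; fun_prop

lemma g_pos (N : ℕ) (x : Sp N) : 0 < gausson N x := by
  unfold gausson; positivity

lemma exp_int (N : ℕ) (b : ℝ) (hb : 0 < b) :
    Integrable (fun x : Sp N => Real.exp (-b * ‖x‖ ^ 2)) := by
  have h := GaussianFourier.integrable_cexp_neg_mul_sq_norm_add (V := Sp N) (b := (b:ℂ)) (by simpa) 0 0
  have := h.norm
  refine this.congr ?_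
  filter_upwards with x
  simp [Complex.norm_exp]
  exact Or.inl (by norm_cast)

lemma g_sq_eq (N : ℕ) (x : Sp N) :
    gausson N x ^ 2 = Real.exp (1 + N) * Real.exp (-2 * ‖x‖ ^ 2) := by
  unfold gausson
  rw [mul_pow, ← Real.exp_nat_mul, ← Real.exp_nat_mul]
  push_cast
  rw [← Real.exp_add, ← Real.exp_add]
  ring_nf

lemma g_sq_int (N : ℕ) : Integrable (fun x : Sp N => gausson N x ^ 2) := by
  simp_rw [g_sq_eq]
  exact (exp_int N 2 (by norm_num)).const_mul _

lemma massR_pos (N : ℕ) : 0 < massR N := by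
  rw [massR, integral_pos_iff_support_of_nonneg (fun x => by positivity) (g_sq_int N)]
  have : (Function.support fun x : Sp N => gausson N x ^ 2) = Set.univ := by
    ext x
    simp only [Function.mem_support, Set.mem_univ, iff_true]
    have := g_pos N x; positivity
  rw [this]
  exact isOpen_univ.measure_pos volume Set.univ_nonempty

lemma g_sq_int_tr (N : ℕ) (y : Sp N) :
    Integrable (fun x : Sp N => gausson N (x + y) ^ 2) :=
  (g_sq_int N).comp_add_right y

lemma mass_tr (N : ℕ) (y : Sp N) :
    (∫ x : Sp N, gausson N (x + y) ^ 2) = massR N :=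
  integral_add_right_eq_self (fun x => gausson N x ^ 2) y

lemma g_bound (N : ℕ) {y : Sp N} {B : ℝ} (hy : ‖y‖ ≤ B) (x : Sp N) :
    gausson N (x + y) ≤ Real.exp ((1 + N) / 2 + B ^ 2) * Real.exp (-‖x‖ ^ 2 / 2) := by
  unfold gausson
  rw [← Real.exp_add, ← Real.exp_add]
  apply Real.exp_le_exp.2
  have h1 : ‖x‖ ≤ ‖x + y‖ + B := by
    have := norm_add_le (x + y) (-y)
    simp only [add_neg_cancel_right, norm_neg] at this
    linarith
  nlinarith [norm_nonneg (x + y), norm_nonneg x, sq_nonneg (‖x + y‖ - B)]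

lemma ptwise (a : ℂ) (θ r : ℝ) :
    ‖a - Complex.exp (-(Complex.I * (θ : ℂ))) * (r : ℂ)‖ ^ 2
      = ‖a‖ ^ 2 + r ^ 2 - 2 * ((Complex.exp (Complex.I * (θ : ℂ)) * a).re * r) := by
  have h1 : Complex.exp (-(Complex.I * (θ : ℂ)))
      = starRingEnd ℂ (Complex.exp (Complex.I * (θ:ℂ))) := by
    rw [← Complex.exp_conj]
    congr 1
    simp [Complex.ext_iff]
  have habs : ‖Complex.exp (Complex.I * (θ:ℂ))‖ = 1 := by
    rw [mul_comm]; exact Complex.norm_exp_ofReal_mul_I θ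
  obtain ⟨c, d, hcd⟩ : ∃ c d : ℝ, Complex.exp (Complex.I * (θ:ℂ)) = ⟨c, d⟩ :=
    ⟨_, _, rfl⟩
  have hcd1 : c ^ 2 + d ^ 2 = 1 := by
    have := congrArg (fun z : ℂ => ‖z‖ ^ 2) hcd
    simp only [habs] at this
    rw [Complex.sq_norm, Complex.normSq_mk] at this
    nlinarith
  obtain ⟨p, q, hpq⟩ : ∃ p q : ℝ, a = ⟨p, q⟩ := ⟨_, _, rfl⟩
  rw [h1, hcd, hpq]
  simp [Complex.ext_iff, Complex.sq_norm, Complex.normSq_mk,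
    Complex.normSq_sub]
  ring_nf
  nlinarith [hcd1]

section psi
variable {N : ℕ} (ψ : Sp N → ℂ) (hc : Continuous ψ)
  (hi2 : Integrable fun x => ‖ψ x‖ ^ 2) (hi4 : Integrable fun x => ‖x‖ ^ 2 * ‖ψ x‖ ^ 2)

def crossI (y : Sp N) : ℂ := ∫ x, ψ x * (gausson N (x + y) : ℂ)

include hc hi2 in
lemma int_mul (y : Sp N) : Integrable fun x => ψ x * (gausson N (x + y) : ℂ) := by
  refine Integrable.mono' (g := fun x => (1/2) * (‖ψ x‖ ^ 2 + gausson N (x + y) ^ 2)) ?_ ?_ ?_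
  · exact ((hi2.add (g_sq_int_tr N y)).const_mul _)
  · exact (hc.mul (Complex.continuous_ofReal.comp
      ((g_cont N).comp (continuous_id.add continuous_const)))).aestronglyMeasurable
  · filter_upwards with x
    have h0 : 0 ≤ gausson N (x + y) := (g_pos N _).le
    have : ‖ψ x * (gausson N (x + y) : ℂ)‖ = ‖ψ x‖ * gausson N (x + y) := by
      simp [abs_of_nonneg h0]
    rw [this]
    nlinarith [sq_nonneg (‖ψ x‖ - gausson N (x + y))]

include hc hi2 in
lemma fdist_eq (y : Sp N) (θ : ℝ) :
    (∫ x, ‖ψ x - Complex.exp (-(Complex.I * (θ : ℂ))) * (gausson N (x + y) : ℝ)‖ ^ 2)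
      = (∫ x, ‖ψ x‖ ^ 2) + massR N
        - 2 * (Complex.exp (Complex.I * (θ : ℂ)) * crossI ψ y).re := by
  have hint := int_mul ψ hc hi2 y
  have h1 : ∀ x, ‖ψ x - Complex.exp (-(Complex.I * (θ : ℂ))) * (gausson N (x + y) : ℝ)‖ ^ 2
      = ‖ψ x‖ ^ 2 + gausson N (x + y) ^ 2
        - 2 * ((Complex.exp (Complex.I * (θ:ℂ)) * ψ x).re * gausson N (x + y)) :=
    fun x => ptwise (ψ x) θ (gausson N (x + y))
  simp_rw [h1]
  rw [integral_sub ((hi2.add (g_sq_int_tr N y)).congr ?_) ?_, integral_add hi2 (g_sq_int_tr N y),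
    mass_tr N y]
  rotate_left
  · exact Eventually.of_forall fun x => rfl
  · have : Integrable (fun x => (Complex.exp (Complex.I * (θ:ℂ)) * (ψ x * (gausson N (x+y) : ℂ))).re) :=
      (hint.const_mul _).re
    refine (this.const_mul 2).congr (Eventually.of_forall fun x => ?_)
    simp only [Complex.mul_re]
    push_cast
    simp [Complex.mul_re, Complex.mul_im]
    ring
  congr 1
  rw [integral_const_mul]
  congr 1
  rw [crossI, ← integral_const_mul, ← RCLike.re_to_complex, ← integral_re (hint.const_mul _)]
  apply integral_congr_ae
  filter_upwards with x
  simp [RCLike.re_to_complex, Complex.mul_re, Complex.mul_im]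
  ring

include hc hi2 in
lemma crossI_cont : Continuous (crossI ψ) := by
  rw [continuous_iff_continuousAt]
  intro y₀
  set B : ℝ := ‖y₀‖ + 1 with hB
  set C : ℝ := Real.exp ((1 + N) / 2 + B ^ 2) with hC
  apply continuousAt_of_dominated
    (bound := fun x => (1/2) * ‖ψ x‖ ^ 2 + (1/2) * (C ^ 2 * Real.exp (-1 * ‖x‖ ^ 2)))
  · filter_upwards with y
    exact (hc.mul (Complex.continuous_ofReal.comp
      ((g_cont N).comp (continuous_id.add continuous_const)))).aestronglyMeasurable
  · have hball : ∀ᶠ y in 𝓝 y₀, ‖y‖ ≤ B := by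
      have : Metric.closedBall y₀ 1 ∈ 𝓝 y₀ := Metric.closedBall_mem_nhds y₀ one_pos
      filter_upwards [this] with y hy
      have : dist y y₀ ≤ 1 := hy
      calc ‖y‖ ≤ ‖y₀‖ + dist y y₀ := by
            rw [dist_eq_norm]
            have := norm_add_le (y - y₀) y₀
            simpa [sub_add_cancel, add_comm] using this
        _ ≤ B := by rw [hB]; linarith
    filter_upwards [hball] with y hy
    filter_upwards with x
    have h0 : 0 ≤ gausson N (x + y) := (g_pos N _).le
    have hgb : gausson N (x + y) ≤ C * Real.exp (-‖x‖ ^ 2 / 2) := g_bound N hy x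
    have hn : ‖ψ x * (gausson N (x + y) : ℂ)‖ = ‖ψ x‖ * gausson N (x + y) := by
      simp [abs_of_nonneg h0]
    rw [hn]
    have hsq : (C * Real.exp (-‖x‖ ^ 2 / 2)) ^ 2 = C ^ 2 * Real.exp (-1 * ‖x‖ ^ 2) := by
      rw [mul_pow, pow_two (Real.exp (-‖x‖ ^ 2 / 2)), ← Real.exp_add]
      ring_nf
    nlinarith [sq_nonneg (‖ψ x‖ - C * Real.exp (-‖x‖ ^ 2 / 2)), norm_nonneg (ψ x),
      Real.exp_pos (-‖x‖ ^ 2 / 2), mul_le_mul_of_nonneg_left hgb (norm_nonneg (ψ x))]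
  · exact (hi2.const_mul _).add (((exp_int N 1 one_pos).const_mul _).const_mul _)
  · filter_upwards with x
    have hg : Continuous fun y : Sp N => (gausson N (x + y) : ℂ) :=
      Complex.continuous_ofReal.comp ((g_cont N).comp (continuous_const.add continuous_id))
    exact (continuous_const.mul hg).continuousAt


end psi

lemma amgm {t w a g : ℝ} (ht : 0 < t) (hw : 1 ≤ w) :
    a * g ≤ t / 2 * (w * a ^ 2) + 1 / (2 * t) * (g ^ 2 / w) := by
  have hw0 : 0 < w := lt_of_lt_of_le one_pos hw
  have key : t / 2 * (w * a ^ 2) + 1 / (2 * t) * (g ^ 2 / w) - a * g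
      = (t * w * a - g) ^ 2 / (2 * t * w) := by
    field_simp
    ring
  nlinarith [div_nonneg (sq_nonneg (t * w * a - g)) (by positivity : (0:ℝ) ≤ 2 * t * w)]

lemma G_small (N : ℕ) {ε : ℝ} (hε : 0 < ε) :
    ∃ K : ℝ, ∀ y : Sp N, K ≤ ‖y‖ →
      (∫ x, gausson N (x + y) ^ 2 / (1 + ‖x‖ ^ 2)) ≤ ε := by
  have hG : ∀ y : Sp N, (∫ x, gausson N (x + y) ^ 2 / (1 + ‖x‖ ^ 2))
      = ∫ u, gausson N u ^ 2 / (1 + ‖u - y‖ ^ 2) := by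
    intro y
    rw [← integral_add_right_eq_self (fun u => gausson N u ^ 2 / (1 + ‖u - y‖ ^ 2)) y]
    congr 1
    funext x
    simp [add_sub_cancel_right]
  by_contra hcon
  push_neg at hcon
  choose y hy1 hy2 using fun n : ℕ => hcon (n : ℝ)
  have ht : Tendsto (fun n => ∫ u, gausson N u ^ 2 / (1 + ‖u - y n‖ ^ 2)) atTop (𝓝 0) := by
    have h0 : (0:ℝ) = ∫ _u : Sp N, (0:ℝ) := by simp
    rw [h0]
    apply tendsto_integral_of_dominated_convergence (bound := fun u => gausson N u ^ 2)
    · intro n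
      exact (((g_cont N).pow 2).div
        ((continuous_const.add ((continuous_id.sub continuous_const).norm.pow 2)))
        (fun u => by simp only [Pi.add_apply, Pi.pow_apply]; positivity)).aestronglyMeasurable
    · exact g_sq_int N
    · intro n
      filter_upwards with u
      rw [Real.norm_of_nonneg (by positivity)]
      apply div_le_self (by positivity)
      nlinarith [sq_nonneg ‖u - y n‖]
    · filter_upwards with u
      have hd : Tendsto (fun n => ‖u - y n‖) atTop atTop := by
        apply tendsto_atTop_mono _ (tendsto_atTop_add_const_right atTop (-‖u‖)
          tendsto_natCast_atTop_atTop)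
        intro n
        have h1 : ‖y n‖ - ‖u‖ ≤ ‖y n - u‖ := norm_sub_norm_le _ _
        rw [norm_sub_rev] at h1
        have := hy1 n
        show (n:ℝ) + -‖u‖ ≤ ‖u - y n‖
        linarith
      have hd2 : Tendsto (fun n => 1 + ‖u - y n‖ ^ 2) atTop atTop := by
        apply tendsto_atTop_add_const_left
        simpa [pow_two] using hd.atTop_mul_atTop₀ hd
      simpa using tendsto_const_nhds.div_atTop (f := fun _ : ℕ => gausson N u ^ 2) hd2
  have := ht.eventually_lt_const hε
  obtain ⟨n, hn⟩ := this.exists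
  have := hy2 n
  rw [hG (y n)] at this
  linarith

section psi2
variable {N : ℕ} (ψ : Sp N → ℂ) (hc : Continuous ψ)
  (hi2 : Integrable fun x => ‖ψ x‖ ^ 2) (hi4 : Integrable fun x => ‖x‖ ^ 2 * ‖ψ x‖ ^ 2)

include hc hi2 hi4 in
lemma crossI_small {ε : ℝ} (hε : 0 < ε) :
    ∃ K : ℝ, ∀ y : Sp N, K ≤ ‖y‖ → ‖crossI ψ y‖ ≤ ε := by
  set B₁ := ∫ x, (1 + ‖x‖ ^ 2) * ‖ψ x‖ ^ 2 with hB₁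
  have hB₁i : Integrable (fun x : Sp N => (1 + ‖x‖ ^ 2) * ‖ψ x‖ ^ 2) := by
    refine (hi2.add hi4).congr ?_
    filter_upwards with x
    simp only [Pi.add_apply]
    ring
  have hB₁0 : 0 ≤ B₁ := integral_nonneg (fun x => by positivity)
  obtain ⟨t, ht0, htB⟩ : ∃ t : ℝ, 0 < t ∧ t * (B₁ + 1) = ε :=
    ⟨ε / (B₁ + 1), div_pos hε (by linarith), by field_simp⟩
  obtain ⟨K, hK⟩ := G_small N (show (0:ℝ) < t * ε by positivity)
  refine ⟨K, fun y hy => ?_⟩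
  have hgi : Integrable (fun x => gausson N (x + y) ^ 2 / (1 + ‖x‖ ^ 2)) := by
    refine (g_sq_int_tr N y).mono' ?_ ?_
    · exact ((((g_cont N).comp (continuous_id.add continuous_const)).pow 2).div
        (continuous_const.add (continuous_norm.pow 2)) (fun u => by simp only [Pi.add_apply, Pi.pow_apply]; positivity)).aestronglyMeasurable
    · filter_upwards with x
      rw [Real.norm_of_nonneg (by positivity)]
      apply div_le_self (by positivity)
      nlinarith [sq_nonneg ‖x‖]
  have h1 : ‖crossI ψ y‖ ≤ ∫ x, ‖ψ x‖ * gausson N (x + y) := by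
    calc ‖crossI ψ y‖ ≤ ∫ x, ‖ψ x * (gausson N (x + y) : ℂ)‖ :=
          norm_integral_le_integral_norm _
      _ = ∫ x, ‖ψ x‖ * gausson N (x + y) := by
          congr 1
          funext x
          simp [abs_of_nonneg (g_pos N (x + y)).le]
  have h2 : (∫ x, ‖ψ x‖ * gausson N (x + y))
      ≤ ∫ x, (t / 2 * ((1 + ‖x‖ ^ 2) * ‖ψ x‖ ^ 2)
          + 1 / (2 * t) * (gausson N (x + y) ^ 2 / (1 + ‖x‖ ^ 2))) := by
    apply integral_mono
    · refine (int_mul ψ hc hi2 y).norm.congr ?_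
      filter_upwards with x
      simp [abs_of_nonneg (g_pos N (x + y)).le]
    · exact (hB₁i.const_mul _).add (hgi.const_mul _)
    · intro x
      exact amgm ht0 (by nlinarith [sq_nonneg ‖x‖])
  have h3 : (∫ x, (t / 2 * ((1 + ‖x‖ ^ 2) * ‖ψ x‖ ^ 2)
          + 1 / (2 * t) * (gausson N (x + y) ^ 2 / (1 + ‖x‖ ^ 2))))
      = t / 2 * B₁ + 1 / (2 * t) * ∫ x, gausson N (x + y) ^ 2 / (1 + ‖x‖ ^ 2) := by
    rw [integral_add (hB₁i.const_mul _) (hgi.const_mul _), integral_const_mul, integral_const_mul]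
  have h4 := hK y hy
  have hfin : 1 / (2 * t) * (t * ε) = ε / 2 := by
    field_simp
  have hmono : 1 / (2 * t) * (∫ x, gausson N (x + y) ^ 2 / (1 + ‖x‖ ^ 2))
      ≤ 1 / (2 * t) * (t * ε) := by
    apply mul_le_mul_of_nonneg_left h4 (by positivity)
  calc ‖crossI ψ y‖ ≤ t / 2 * B₁ + 1 / (2 * t)
        * ∫ x, gausson N (x + y) ^ 2 / (1 + ‖x‖ ^ 2) := by
        rw [← h3]; linarith
    _ ≤ t / 2 * B₁ + ε / 2 := by rw [← hfin]; linarith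
    _ ≤ ε := by nlinarith
end psi2

set_option maxHeartbeats 1000000 in
/-- the modulation infimum is attained. -/
theorem stmt14 (N : ℕ) (hN : 1 ≤ N) (ψ : Sp N → ℂ) (hψ : IsSigma ψ)
    (hm : (∫ x, ‖ψ x‖ ^ 2) = massR N)
    (hinf : sInf {d : ℝ | ∃ (y : Sp N) (θ : ℝ), θ ∈ Set.Ico 0 (2 * π) ∧
        d = Real.sqrt (∫ x,
          ‖ψ x - Complex.exp (-(Complex.I * (θ : ℂ))) * (gausson N (x + y) : ℝ)‖ ^ 2)}
      ≤ Real.sqrt (massR N)) :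
    ∃ (y₀ : Sp N) (θ₀ : ℝ), θ₀ ∈ Set.Ico 0 (2 * π) ∧
      Real.sqrt (∫ x,
          ‖ψ x - Complex.exp (-(Complex.I * (θ₀ : ℂ))) * (gausson N (x + y₀) : ℝ)‖ ^ 2)
        = sInf {d : ℝ | ∃ (y : Sp N) (θ : ℝ), θ ∈ Set.Ico 0 (2 * π) ∧
            d = Real.sqrt (∫ x,
              ‖ψ x - Complex.exp (-(Complex.I * (θ : ℂ))) * (gausson N (x + y) : ℝ)‖ ^ 2)} := by
  classical
  have hc : Continuous ψ := hψ.1.continuous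
  have hi2 : Integrable fun x => ‖ψ x‖ ^ 2 := hψ.2.1
  have hi4 : Integrable fun x => ‖x‖ ^ 2 * ‖ψ x‖ ^ 2 := hψ.2.2.2
  set m := massR N with hmdef
  have hm0 : 0 < m := massR_pos N
  set F : Sp N × ℝ → ℝ := fun p => ∫ x,
      ‖ψ x - Complex.exp (-(Complex.I * (p.2 : ℂ))) * (gausson N (x + p.1) : ℝ)‖ ^ 2 with hFdef
  have hFnn : ∀ p, 0 ≤ F p := fun p => integral_nonneg (fun x => by positivity)
  have hFeq : ∀ p : Sp N × ℝ,
      F p = m + m - 2 * (Complex.exp (Complex.I * (p.2 : ℂ)) * crossI ψ p.1).re := by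
    intro p
    rw [hFdef]
    simp only
    rw [fdist_eq ψ hc hi2 p.1 p.2, hm]
  have hFc : Continuous F := by
    have : Continuous fun p : Sp N × ℝ =>
        m + m - 2 * (Complex.exp (Complex.I * (p.2 : ℂ)) * crossI ψ p.1).re := by
      refine continuous_const.sub (continuous_const.mul (Complex.continuous_re.comp ?_))
      exact (Complex.continuous_exp.comp (continuous_const.mul
        (Complex.continuous_ofReal.comp continuous_snd))).mul
        ((crossI_cont ψ hc hi2).comp continuous_fst)
    exact this.congr (fun p => (hFeq p).symm)
  obtain ⟨K, hK⟩ := crossI_small ψ hc hi2 hi4 (show (0:ℝ) < m / 4 by linarith)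
  set K' := max K 0 with hK'
  set C : Set (Sp N × ℝ) := Metric.closedBall (0 : Sp N) K' ×ˢ Set.Icc (0:ℝ) (2 * π) with hC
  have hCcomp : IsCompact C := (isCompact_closedBall _ _).prod isCompact_Icc
  have hCne : C.Nonempty := by
    refine ⟨((0 : Sp N), 0), ?_, ?_⟩
    · simp [Metric.mem_closedBall, hK', le_max_right]
    · exact ⟨le_refl 0, by positivity⟩
  obtain ⟨p₀, hp₀C, hp₀min⟩ := hCcomp.exists_isMinOn hCne hFc.continuousOn
  have hmin' : ∀ q ∈ C, F p₀ ≤ F q := isMinOn_iff.mp hp₀min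
  -- θ₁ adjustment
  set θ₁ := if p₀.2 = 2 * π then 0 else p₀.2 with hθ₁def
  have hθ₁ : θ₁ ∈ Set.Ico (0:ℝ) (2 * π) := by
    rw [hθ₁def]
    split_ifs with h
    · exact ⟨le_refl 0, by positivity⟩
    · obtain ⟨h1, h2⟩ := hp₀C.2
      exact ⟨h1, lt_of_le_of_ne h2 h⟩
  have hFθ : F (p₀.1, θ₁) = F p₀ := by
    rw [hθ₁def]
    split_ifs with h
    · rw [hFeq, hFeq]
      have : Complex.exp (Complex.I * ((p₀.2 : ℝ) : ℂ)) = Complex.exp (Complex.I * ((0:ℝ):ℂ)) := by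
        rw [h]
        push_cast
        rw [show Complex.I * (2 * (π:ℂ)) = 2 * π * Complex.I by ring, Complex.exp_two_pi_mul_I]
        simp
      simp only [this]
    · rfl
  -- big y bound
  have hbig : ∀ (y : Sp N) (θ : ℝ), ¬ ‖y‖ ≤ K' → 3 / 2 * m ≤ F (y, θ) := by
    intro y θ hy
    have hKy : K ≤ ‖y‖ := le_of_lt (lt_of_le_of_lt (le_max_left K 0) (not_le.mp hy))
    have hcr := hK y hKy
    have hre : (Complex.exp (Complex.I * (θ : ℂ)) * crossI ψ y).re ≤ m / 4 := by
      calc (Complex.exp (Complex.I * (θ : ℂ)) * crossI ψ y).re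
          ≤ ‖Complex.exp (Complex.I * (θ : ℂ)) * crossI ψ y‖ := Complex.re_le_norm _
        _ = ‖crossI ψ y‖ := by
            rw [norm_mul, mul_comm Complex.I, Complex.norm_exp_ofReal_mul_I, one_mul]
        _ ≤ m / 4 := hcr
    rw [hFeq]
    simp only
    linarith
  -- F (p₀.1, θ₁) ≤ m
  have hSne : {d : ℝ | ∃ (y : Sp N) (θ : ℝ), θ ∈ Set.Ico 0 (2 * π) ∧
      d = Real.sqrt (∫ x,
        ‖ψ x - Complex.exp (-(Complex.I * (θ : ℂ))) * (gausson N (x + y) : ℝ)‖ ^ 2)}.Nonempty :=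
    ⟨_, ⟨0, 0, ⟨le_refl 0, by positivity⟩, rfl⟩⟩
  have hlem : F (p₀.1, θ₁) ≤ m := by
    by_contra hgt
    push_neg at hgt
    have hlb : Real.sqrt m < sInf {d : ℝ | ∃ (y : Sp N) (θ : ℝ), θ ∈ Set.Ico 0 (2 * π) ∧
        d = Real.sqrt (∫ x,
          ‖ψ x - Complex.exp (-(Complex.I * (θ : ℂ))) * (gausson N (x + y) : ℝ)‖ ^ 2)} := by
      have hmin : Real.sqrt m < min (Real.sqrt (F (p₀.1, θ₁))) (Real.sqrt (3 / 2 * m)) := by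
        apply lt_min
        · exact Real.sqrt_lt_sqrt hm0.le hgt
        · exact Real.sqrt_lt_sqrt hm0.le (by linarith)
      refine lt_of_lt_of_le hmin (le_csInf hSne ?_)
      rintro d ⟨y, θ, hθ, rfl⟩
      by_cases hy : ‖y‖ ≤ K'
      · refine le_trans (min_le_left _ _) ?_
        apply Real.sqrt_le_sqrt
        rw [hFθ]
        exact hmin' (y, θ) (Set.mk_mem_prod
          (by simpa [Metric.mem_closedBall, dist_zero_right] using hy)
          (Set.Ico_subset_Icc_self hθ))
      · refine le_trans (min_le_right _ _) ?_
        apply Real.sqrt_le_sqrt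
        exact hbig y θ hy
    exact absurd hinf (not_le.mpr hlb)
  refine ⟨p₀.1, θ₁, hθ₁, le_antisymm (le_csInf hSne ?_) (csInf_le ?_ ⟨p₀.1, θ₁, hθ₁, rfl⟩)⟩
  · rintro d ⟨y, θ, hθ, rfl⟩
    show Real.sqrt (F (p₀.1, θ₁)) ≤ Real.sqrt (F (y, θ))
    by_cases hy : ‖y‖ ≤ K'
    · apply Real.sqrt_le_sqrt
      rw [hFθ]
      exact hmin' (y, θ) (Set.mk_mem_prod
        (by simpa [Metric.mem_closedBall, dist_zero_right] using hy)
        (Set.Ico_subset_Icc_self hθ))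
    · apply Real.sqrt_le_sqrt
      exact le_trans (by linarith) (hbig y θ hy)
  · exact ⟨0, by rintro d ⟨y, θ, hθ, rfl⟩; exact Real.sqrt_nonneg _⟩
end
end

section
/- Let N ≥ 1, let R be the Gausson, and let u : ℝ^N → ℂ be of Σ-class. Suppose (y₀, θ₀) ∈ ℝ^N × ℝ minimizes the function (y, θ) ↦ ‖e^{iθ} u(·−y) − R‖²_{L²} over ℝ^N × ℝ, and set w(x) = e^{iθ₀} u(x−y₀). Then w satisfies the orthogonality conditions Im ∫_{ℝ^N} w(x) R(x) dx = 0 and Re ∫_{ℝ^N} w(x) ∂R/∂x_j(x) dx = 0 for all j = 1, …, N. (First-order conditions at an optimal modulation.) -/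
open MeasureTheory Real Filter Topology
open scoped InnerProductSpace BigOperators

noncomputable section

variable {N : ℕ}

namespace Stmt15Aux

lemma gausson_continuous : Continuous (gausson N) :=
  continuous_const.mul (Real.continuous_exp.comp (continuous_norm.pow 2).neg)

lemma gausson_pos (x : Sp N) : 0 < gausson N x :=
  mul_pos (Real.exp_pos _) (Real.exp_pos _)

lemma gaussInt {b : ℝ} (hb : 0 < b) :
    Integrable (fun x : Sp N => Real.exp (-b * ‖x‖ ^ 2)) := by
  have h := GaussianFourier.integrable_cexp_neg_mul_sq_norm_add
    (V := Sp N) (b := (b : ℂ)) (by simpa using hb) 0 0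
  have h2 := h.norm
  refine h2.congr (Filter.Eventually.of_forall fun x => ?_)
  simp [Complex.norm_exp, ← Complex.ofReal_pow]

lemma memLp2_gauss {b : ℝ} (hb : 0 < b) :
    MemLp (fun x : Sp N => Real.exp (-b * ‖x‖ ^ 2)) 2 (volume : Measure (Sp N)) := by
  have hc : Continuous (fun x : Sp N => Real.exp (-b * ‖x‖ ^ 2)) :=
    by continuity
  rw [memLp_two_iff_integrable_sq hc.aestronglyMeasurable]
  refine (gaussInt (show (0:ℝ) < 2*b by linarith)).congr
    (Filter.Eventually.of_forall fun x => ?_)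
  simp only [sq, ← Real.exp_add]
  ring_nf


lemma memLp2_gausson : MemLp (gausson N) 2 (volume : Measure (Sp N)) := by
  refine (memLp2_gauss one_pos).of_le_mul gausson_continuous.aestronglyMeasurable
    (Filter.Eventually.of_forall fun x => ?_) (c := Real.exp ((1 + (N:ℝ)) / 2))
  rw [Real.norm_eq_abs, abs_of_pos (gausson_pos x), Real.norm_eq_abs,
    abs_of_pos (Real.exp_pos _)]
  simp [gausson]

lemma memLp2_gaussonC :
    MemLp (fun x : Sp N => (gausson N x : ℂ)) 2 (volume : Measure (Sp N)) :=
  memLp2_gausson.of_le (Complex.continuous_ofReal.comp gausson_continuous).aestronglyMeasurable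
    (Filter.Eventually.of_forall fun x => by simp)

lemma L2mulC {f g : Sp N → ℂ} (hf : MemLp f 2 (volume : Measure (Sp N)))
    (hg : MemLp g 2 volume) : Integrable (fun x => f x * g x) := by
  rw [← memLp_one_iff_integrable]
  have h := hf.smul (φ := g) hg (r := 1)
  exact h.ae_eq (Filter.Eventually.of_forall fun x => by
    simp [Pi.smul_apply, smul_eq_mul, mul_comm])

lemma L2mulR {f g : Sp N → ℝ} (hf : MemLp f 2 (volume : Measure (Sp N)))
    (hg : MemLp g 2 volume) : Integrable (fun x => f x * g x) := by
  rw [← memLp_one_iff_integrable]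
  have h := hf.smul (φ := g) hg (r := 1)
  exact h.ae_eq (Filter.Eventually.of_forall fun x => by
    simp [Pi.smul_apply, smul_eq_mul, mul_comm])

lemma hasFDerivAt_gausson (x : Sp N) :
    HasFDerivAt (gausson N) ((-2 * gausson N x) • innerSL ℝ x) x := by
  have h1 : HasFDerivAt (fun y : Sp N => ‖y‖ ^ 2) (2 • innerSL ℝ x) x := by
    simpa using (hasFDerivAt_id x).norm_sq
  have h4 := (h1.neg.exp).const_mul (Real.exp ((1 + (N:ℝ)) / 2))
  refine h4.congr_fderiv ?_
  ext v
  simp [gausson]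
  ring

lemma pdR_gausson (j : Fin N) (x : Sp N) :
    pdR (gausson N) j x = (-2 * x j) * gausson N x := by
  rw [pdR, (hasFDerivAt_gausson x).fderiv]
  simp [EuclideanSpace.inner_single_right, real_inner_comm]
  ring

lemma pdR_gausson_cont (j : Fin N) : Continuous (pdR (gausson N) j) := by
  have : pdR (gausson N) j = fun x => (-2 * x j) * gausson N x := funext (pdR_gausson j)
  rw [this]
  exact (continuous_const.mul ((EuclideanSpace.proj (𝕜 := ℝ) j).continuous)).mul
    gausson_continuous

lemma coord_le_norm (j : Fin N) (z : Sp N) : |z j| ≤ ‖z‖ := by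
  have h := abs_real_inner_le_norm z (EuclideanSpace.single j (1:ℝ))
  rw [EuclideanSpace.norm_single] at h
  simpa [EuclideanSpace.inner_single_right] using h

lemma pdR_gausson_bound (j : Fin N) (z : Sp N) :
    |pdR (gausson N) j z| ≤ 2 * Real.exp ((1 + (N:ℝ)) / 2) * Real.exp (-‖z‖ ^ 2 / 2) := by
  rw [pdR_gausson]
  have h1 : |(-2 * z j) * gausson N z| ≤ 2 * ‖z‖ * gausson N z := by
    rw [abs_mul, abs_of_pos (gausson_pos z), abs_mul, abs_neg, abs_two]
    have := coord_le_norm j z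
    have hg := (gausson_pos (N := N) z).le
    nlinarith [abs_nonneg (z j), norm_nonneg z]
  refine h1.trans ?_
  have h2 : ‖z‖ ≤ Real.exp (‖z‖ ^ 2 / 2) := by
    have := Real.add_one_le_exp (‖z‖ ^ 2 / 2)
    nlinarith [norm_nonneg z, sq_nonneg (‖z‖ - 1)]
  have h3 : 2 * ‖z‖ * gausson N z
      ≤ 2 * Real.exp (‖z‖ ^ 2 / 2) * gausson N z := by
    have hg := (gausson_pos (N := N) z).le
    nlinarith [norm_nonneg z]
  refine h3.trans ?_
  rw [gausson]
  rw [show (2:ℝ) * Real.exp (‖z‖ ^ 2 / 2) * (Real.exp ((1 + (N:ℝ)) / 2) * Real.exp (-‖z‖ ^ 2))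
      = 2 * Real.exp ((1 + (N:ℝ)) / 2) * (Real.exp (‖z‖ ^ 2 / 2) * Real.exp (-‖z‖ ^ 2)) by ring,
    ← Real.exp_add]
  have : ‖z‖ ^ 2 / 2 + -‖z‖ ^ 2 = -‖z‖ ^ 2 / 2 := by ring
  rw [this]

lemma memLp2_pdR_gausson (j : Fin N) :
    MemLp (pdR (gausson N) j) 2 (volume : Measure (Sp N)) := by
  refine ((memLp2_gauss (N := N) (b := 1/2) (by norm_num)).const_mul
      (2 * Real.exp ((1 + (N:ℝ)) / 2))).of_le
    (pdR_gausson_cont j).aestronglyMeasurable (Filter.Eventually.of_forall fun z => ?_)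
  rw [Real.norm_eq_abs, Real.norm_eq_abs]
  refine (pdR_gausson_bound j z).trans ?_
  rw [abs_mul, abs_of_pos (by positivity), abs_of_pos (Real.exp_pos _)]
  rw [show -‖z‖^2/2 = -(1/2) * ‖z‖^2 by ring]

lemma expand_ptwise (θ : ℝ) (a : ℂ) (r : ℝ) :
    ‖Complex.exp (Complex.I * (θ:ℂ)) * a - (r : ℂ)‖ ^ 2
      = ‖a‖ ^ 2 + r ^ 2 - 2 * (Complex.exp (Complex.I * (θ:ℂ)) * a * (r:ℂ)).re := by
  set z := Complex.exp (Complex.I * (θ:ℂ)) * a with hz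
  have hza : ‖z‖ = ‖a‖ := by
    rw [hz, norm_mul, Complex.norm_exp]
    simp
  have h1 : ‖z - (r:ℂ)‖ ^ 2 = (z.re - r) ^ 2 + z.im ^ 2 := by
    rw [Complex.sq_norm, Complex.normSq_apply]
    simp [sq]
  have h2 : ‖a‖ ^ 2 = z.re ^ 2 + z.im ^ 2 := by
    rw [← hza, Complex.sq_norm, Complex.normSq_apply]; simp [sq]
  have h3 : (z * (r:ℂ)).re = z.re * r := by simp
  rw [h1, h2, h3]
  ring


lemma memLp2_ofReal {f : Sp N → ℝ} (hf : MemLp f 2 (volume : Measure (Sp N))) :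
    MemLp (fun x => ((f x : ℝ) : ℂ)) 2 (volume : Measure (Sp N)) :=
  hf.of_le (Complex.continuous_ofReal.comp_aestronglyMeasurable hf.1)
    (Filter.Eventually.of_forall fun x => by simp)

lemma hasDerivAt_gausson_dir (x w : Sp N) (j : Fin N) (t : ℝ) :
    HasDerivAt (fun s : ℝ => gausson N (x + w + s • EuclideanSpace.single j (1:ℝ)))
      (pdR (gausson N) j (x + w + t • EuclideanSpace.single j 1)) t := by
  set e : Sp N := EuclideanSpace.single j (1:ℝ) with he
  set z : Sp N := x + w + t • e with hz
  have hline : HasDerivAt (fun s : ℝ => x + w + s • e) e t := by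
    simpa using ((hasDerivAt_id t).smul_const e).const_add (x + w)
  have h := (hasFDerivAt_gausson z).comp_hasDerivAt t hline
  refine h.congr_deriv ?_
  rw [pdR_gausson]
  simp [he, EuclideanSpace.inner_single_right]
  ring

lemma gauss_shift {x w : Sp N} {a : ℝ} (hw : ‖w‖ ≤ a) :
    Real.exp (-‖x + w‖ ^ 2 / 2) ≤ Real.exp (a ^ 2 / 2) * Real.exp (-(1/4) * ‖x‖ ^ 2) := by
  rw [← Real.exp_add, Real.exp_le_exp]
  have h1 : ‖x‖ ≤ ‖x + w‖ + ‖w‖ := by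
    have h2 := norm_add_le (x + w) (-w)
    simpa using h2
  have h0 : 0 ≤ a := (norm_nonneg w).trans hw
  nlinarith [norm_nonneg (x + w), norm_nonneg x, norm_nonneg w,
    sq_nonneg (‖x + w‖ - ‖w‖), sq_nonneg (‖x + w‖ - a)]

end Stmt15Aux

/-- first-order conditions at an optimal modulation. -/
theorem stmt15 (N : ℕ) (hN : 1 ≤ N) (u : Sp N → ℂ) (hu : IsSigma u)
    (y₀ : Sp N) (θ₀ : ℝ)
    (hmin : ∀ (y : Sp N) (θ : ℝ),
      (∫ x, ‖Complex.exp (Complex.I * (θ₀ : ℂ)) * u (x - y₀) - (gausson N x : ℝ)‖ ^ 2) ≤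
        ∫ x, ‖Complex.exp (Complex.I * (θ : ℂ)) * u (x - y) - (gausson N x : ℝ)‖ ^ 2) :
    (∫ x, Complex.exp (Complex.I * (θ₀ : ℂ)) * u (x - y₀) * (gausson N x : ℝ)).im = 0 ∧
    ∀ j : Fin N,
      (∫ x, Complex.exp (Complex.I * (θ₀ : ℂ)) * u (x - y₀) * (pdR (gausson N) j x : ℝ)).re
        = 0 := by
  classical
  have hu1 : Continuous u := hu.1.continuous
  have hu2 : MemLp u 2 (volume : Measure (Sp N)) :=
    (memLp_two_iff_integrable_sq_norm hu1.aestronglyMeasurable).2 hu.2.1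
  have huy2 : ∀ y : Sp N, MemLp (fun x => u (x - y)) 2 (volume : Measure (Sp N)) := fun y =>
    hu2.comp_measurePreserving (measurePreserving_sub_right volume y)
  have hprod : ∀ (y : Sp N) (θ : ℝ),
      Integrable (fun x : Sp N =>
        Complex.exp (Complex.I * (θ:ℂ)) * u (x - y) * (gausson N x : ℂ)) := fun y θ => by
    have h := Stmt15Aux.L2mulC ((huy2 y).const_mul (Complex.exp (Complex.I * (θ:ℂ))))
      Stmt15Aux.memLp2_gaussonC
    exact h
  set M : ℝ := ∫ x : Sp N, ‖u x‖ ^ 2 with hM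
  set m : ℝ := ∫ x : Sp N, gausson N x ^ 2 with hm
  have key : ∀ (y : Sp N) (θ : ℝ),
      (∫ x, ‖Complex.exp (Complex.I * (θ:ℂ)) * u (x - y) - (gausson N x : ℝ)‖ ^ 2)
        = M + m - 2 * ∫ x,
            (Complex.exp (Complex.I * (θ:ℂ)) * u (x - y) * (gausson N x : ℂ)).re := by
    intro y θ
    have h1 : Integrable (fun x : Sp N => ‖u (x - y)‖ ^ 2) :=
      (memLp_two_iff_integrable_sq_norm (huy2 y).1).1 (huy2 y)
    have h2 : Integrable (fun x : Sp N => gausson N x ^ 2) :=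
      Stmt15Aux.memLp2_gausson.integrable_sq
    have h3 : Integrable (fun x : Sp N =>
        (Complex.exp (Complex.I * (θ:ℂ)) * u (x - y) * (gausson N x : ℂ)).re) :=
      (hprod y θ).re
    calc (∫ x, ‖Complex.exp (Complex.I * (θ:ℂ)) * u (x - y) - (gausson N x : ℝ)‖ ^ 2)
        = ∫ x, (‖u (x - y)‖ ^ 2 + gausson N x ^ 2
            - 2 * (Complex.exp (Complex.I * (θ:ℂ)) * u (x - y) * (gausson N x : ℂ)).re) := by
          refine integral_congr_ae (Filter.Eventually.of_forall fun x => ?_)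
          exact Stmt15Aux.expand_ptwise θ (u (x - y)) (gausson N x)
      _ = (∫ x, (‖u (x - y)‖ ^ 2 + gausson N x ^ 2))
            - ∫ x, 2 * (Complex.exp (Complex.I * (θ:ℂ)) * u (x - y) * (gausson N x : ℂ)).re :=
          integral_sub (h1.add h2) (h3.const_mul 2)
      _ = M + m - 2 * ∫ x,
            (Complex.exp (Complex.I * (θ:ℂ)) * u (x - y) * (gausson N x : ℂ)).re := by
          rw [integral_add h1 h2, integral_const_mul]
          have := MeasureTheory.integral_sub_right_eq_self
            (μ := (volume : Measure (Sp N))) (fun x : Sp N => ‖u x‖ ^ 2) y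
          rw [this]
  constructor
  · -- θ part
    set c0 : ℂ := ∫ x : Sp N, u (x - y₀) * (gausson N x : ℂ) with hc0
    have hint0 : ∀ θ : ℝ, (∫ x : Sp N,
        Complex.exp (Complex.I * (θ:ℂ)) * u (x - y₀) * (gausson N x : ℂ))
          = Complex.exp (Complex.I * (θ:ℂ)) * c0 := by
      intro θ
      rw [show (fun x : Sp N =>
            Complex.exp (Complex.I * (θ:ℂ)) * u (x - y₀) * (gausson N x : ℂ))
          = fun x : Sp N => Complex.exp (Complex.I * (θ:ℂ))
              * (u (x - y₀) * (gausson N x : ℂ)) from funext fun x => by ring]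
      rw [MeasureTheory.integral_const_mul, hc0]
    have hA : ∀ θ : ℝ,
        (∫ x : Sp N, (Complex.exp (Complex.I * (θ:ℂ)) * u (x - y₀) * (gausson N x : ℂ)).re)
          = (Complex.exp (Complex.I * (θ:ℂ)) * c0).re := by
      intro θ
      have h := Complex.reCLM.integral_comp_comm (hprod y₀ θ)
      simp only [Complex.reCLM_apply] at h
      rw [h, hint0 θ]
    have hle : ∀ θ : ℝ, (Complex.exp (Complex.I * (θ:ℂ)) * c0).re
        ≤ (Complex.exp (Complex.I * (θ₀:ℂ)) * c0).re := by
      intro θ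
      have h := hmin y₀ θ
      rw [key y₀ θ₀, key y₀ θ, hA θ₀, hA θ] at h
      linarith
    have hexp : Complex.exp (Complex.I * ((-Complex.arg c0 : ℝ):ℂ)) * c0
        = ((‖c0‖ : ℝ) : ℂ) := by
      have h2 := Complex.norm_mul_exp_arg_mul_I c0
      set s : ℝ := Complex.arg c0 with hs
      set r : ℝ := ‖c0‖ with hr
      rw [← h2]
      rw [show Complex.exp (Complex.I * ((-s : ℝ):ℂ))
            * (((r:ℝ):ℂ) * Complex.exp ((s : ℂ) * Complex.I))
          = ((r:ℝ):ℂ) * (Complex.exp (Complex.I * ((-s : ℝ):ℂ))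
            * Complex.exp ((s : ℂ) * Complex.I)) from by ring]
      rw [← Complex.exp_add]
      rw [show Complex.I * ((-s : ℝ):ℂ) + (s : ℂ) * Complex.I = 0 from by push_cast; ring]
      rw [Complex.exp_zero, mul_one]
    have habs : (‖c0‖ : ℝ) ≤ (Complex.exp (Complex.I * (θ₀:ℂ)) * c0).re := by
      have h := hle (-Complex.arg c0)
      rw [hexp] at h
      simpa using h
    rw [hint0 θ₀]
    set T : ℂ := Complex.exp (Complex.I * (θ₀:ℂ)) * c0 with hT
    have habsT : ‖T‖ = ‖c0‖ := by
      rw [hT, norm_mul, Complex.norm_exp]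
      simp
    have h1 : ‖T‖ ≤ T.re := habsT ▸ habs
    have h2 : T.re ≤ ‖T‖ := Complex.re_le_norm T
    have h3 := Complex.sq_norm T
    rw [Complex.normSq_apply] at h3
    have h4 : T.re = ‖T‖ := le_antisymm h2 h1
    rw [pow_two, ← h4] at h3
    have h5 : T.im * T.im = 0 := by linarith
    exact mul_self_eq_zero.mp h5
  · -- y part
    intro j
    set e : Sp N := EuclideanSpace.single j (1:ℝ) with he
    have henorm : ‖e‖ = 1 := by rw [he, EuclideanSpace.norm_single]; norm_num
    set cst : ℝ := Real.exp ((1 + (N:ℝ)) / 2) with hcst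
    set a : ℝ := ‖y₀‖ + 1 with ha
    set F : ℝ → Sp N → ℂ := fun t x =>
      Complex.exp (Complex.I * (θ₀:ℂ)) * u x * (gausson N (x + y₀ + t • e) : ℂ) with hF
    set F' : ℝ → Sp N → ℂ := fun t x =>
      Complex.exp (Complex.I * (θ₀:ℂ)) * u x * (pdR (gausson N) j (x + y₀ + t • e) : ℂ)
      with hF'
    set bound : Sp N → ℝ := fun x =>
      ‖u x‖ * (2 * cst * Real.exp (a ^ 2 / 2) * Real.exp (-(1/4) * ‖x‖ ^ 2)) with hbound
    have hFmeas : ∀ t : ℝ, AEStronglyMeasurable (F t) (volume : Measure (Sp N)) := by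
      intro t
      refine Continuous.aestronglyMeasurable ?_
      exact (continuous_const.mul hu1).mul (Complex.continuous_ofReal.comp
        (Stmt15Aux.gausson_continuous.comp
          ((continuous_id.add continuous_const).add continuous_const)))
    have hFint : ∀ t : ℝ, Integrable (F t) (volume : Measure (Sp N)) := by
      intro t
      have hmem : MemLp (fun x : Sp N => (gausson N (x + y₀ + t • e) : ℂ)) 2
          (volume : Measure (Sp N)) := by
        have h := Stmt15Aux.memLp2_gaussonC (N := N) |>.comp_measurePreserving
          (measurePreserving_add_right volume (y₀ + t • e))
        exact h.ae_eq (Filter.Eventually.of_forall fun x => by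
          simp [Function.comp, add_assoc])
      exact Stmt15Aux.L2mulC (hu2.const_mul _) hmem
    have hF'meas : AEStronglyMeasurable (F' 0) (volume : Measure (Sp N)) := by
      refine Continuous.aestronglyMeasurable ?_
      exact (continuous_const.mul hu1).mul (Complex.continuous_ofReal.comp
        ((Stmt15Aux.pdR_gausson_cont j).comp
          ((continuous_id.add continuous_const).add continuous_const)))
    have hboundInt : Integrable bound (volume : Measure (Sp N)) := by
      have h := Stmt15Aux.L2mulR hu2.norm
        ((Stmt15Aux.memLp2_gauss (N := N) (b := 1/4) (by norm_num)).const_mul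
          (2 * cst * Real.exp (a ^ 2 / 2)))
      exact h.congr (Filter.Eventually.of_forall fun x => by rw [hbound])
    have hbnd : ∀ᵐ x ∂(volume : Measure (Sp N)), ∀ t ∈ Metric.ball (0:ℝ) 1,
        ‖F' t x‖ ≤ bound x := by
      refine Filter.Eventually.of_forall fun x => fun t ht => ?_
      have hw : ‖y₀ + t • e‖ ≤ a := by
        have h1 : ‖t • e‖ = |t| := by rw [norm_smul, henorm, Real.norm_eq_abs, mul_one]
        have h2 : |t| ≤ 1 := by
          have := Metric.mem_ball.1 ht
          rw [Real.dist_eq, sub_zero] at this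
          linarith [le_of_lt this]
        calc ‖y₀ + t • e‖ ≤ ‖y₀‖ + ‖t • e‖ := norm_add_le _ _
          _ ≤ ‖y₀‖ + 1 := by rw [h1]; linarith
      have hb1 : |pdR (gausson N) j (x + y₀ + t • e)|
          ≤ 2 * cst * Real.exp (-‖x + (y₀ + t • e)‖ ^ 2 / 2) := by
        have := Stmt15Aux.pdR_gausson_bound j (x + y₀ + t • e)
        rw [add_assoc] at this ⊢
        exact this
      have hb2 := Stmt15Aux.gauss_shift (x := x) hw
      have hnorm : ‖F' t x‖ = ‖u x‖ * |pdR (gausson N) j (x + y₀ + t • e)| := by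
        rw [hF']
        simp only [norm_mul, Complex.norm_exp, Complex.norm_real, Real.norm_eq_abs]
        rw [show (Complex.I * (θ₀:ℂ)).re = 0 from by simp, Real.exp_zero, one_mul]
      rw [hnorm, hbound]
      have hcstpos : (0:ℝ) < cst := Real.exp_pos _
      have h4 : |pdR (gausson N) j (x + y₀ + t • e)|
          ≤ 2 * cst * Real.exp (a ^ 2 / 2) * Real.exp (-(1/4) * ‖x‖ ^ 2) := by
        refine hb1.trans ?_
        have h5 : (0:ℝ) < 2 * cst := by linarith
        calc 2 * cst * Real.exp (-‖x + (y₀ + t • e)‖ ^ 2 / 2)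
            ≤ 2 * cst * (Real.exp (a ^ 2 / 2) * Real.exp (-(1/4) * ‖x‖ ^ 2)) := by
              exact mul_le_mul_of_nonneg_left hb2 h5.le
          _ = 2 * cst * Real.exp (a ^ 2 / 2) * Real.exp (-(1/4) * ‖x‖ ^ 2) := by ring
      exact mul_le_mul_of_nonneg_left h4 (norm_nonneg (u x))
    have hdiff : ∀ᵐ x ∂(volume : Measure (Sp N)), ∀ t ∈ Metric.ball (0:ℝ) 1,
        HasDerivAt (fun s => F s x) (F' t x) t := by
      refine Filter.Eventually.of_forall fun x => fun t _ => ?_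
      have h := Stmt15Aux.hasDerivAt_gausson_dir x y₀ j t
      have h2 : HasDerivAt (fun s : ℝ => ((gausson N (x + y₀ + s • e) : ℝ) : ℂ))
          ((pdR (gausson N) j (x + y₀ + t • e) : ℂ)) t := by
        have h3 := Complex.ofRealCLM.hasFDerivAt.comp_hasDerivAt t h
        exact h3
      exact h2.const_mul (Complex.exp (Complex.I * (θ₀:ℂ)) * u x)
    obtain ⟨hF'0int, hG⟩ := hasDerivAt_integral_of_dominated_loc_of_deriv_le
      (F := F) (F' := F') (x₀ := (0:ℝ)) (bound := bound) (Metric.ball_mem_nhds 0 one_pos)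
      (Filter.Eventually.of_forall hFmeas) (hFint 0) hF'meas hbnd hboundInt hdiff
    have conn : ∀ t : ℝ, (∫ x, F t x).re
        = ∫ x, (Complex.exp (Complex.I * (θ₀:ℂ)) * u (x - (y₀ + t • e))
            * (gausson N x : ℂ)).re := by
      intro t
      have h := Complex.reCLM.integral_comp_comm (hFint t)
      simp only [Complex.reCLM_apply] at h
      rw [← h]
      have h2 := MeasureTheory.integral_add_right_eq_self (μ := (volume : Measure (Sp N)))
        (fun x : Sp N => (Complex.exp (Complex.I * (θ₀:ℂ)) * u (x - (y₀ + t • e))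
          * (gausson N x : ℂ)).re) (y₀ + t • e)
      rw [← h2]
      refine integral_congr_ae (Filter.Eventually.of_forall fun x => ?_)
      simp only [add_sub_cancel_right, hF]
      rw [add_assoc]
    have hmax : IsLocalMax (fun t : ℝ => (∫ x, F t x).re) 0 := by
      refine Filter.Eventually.of_forall fun t => ?_
      show (∫ x, F t x).re ≤ (∫ x, F 0 x).re
      rw [conn t, conn 0]
      have h := hmin (y₀ + t • e) θ₀
      rw [key (y₀ + t • e) θ₀, key y₀ θ₀] at h
      have h0 : y₀ + (0:ℝ) • e = y₀ := by simp
      rw [h0]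
      linarith
    have hre : HasDerivAt (fun t : ℝ => (∫ x, F t x).re) ((∫ x, F' 0 x).re) 0 := by
      have h := Complex.reCLM.hasFDerivAt.comp_hasDerivAt 0 hG
      exact h
    have hzero : (∫ x, F' 0 x).re = 0 := hmax.hasDerivAt_eq_zero hre
    -- translate back
    have htint : Integrable (fun x : Sp N =>
        Complex.exp (Complex.I * (θ₀:ℂ)) * u (x - y₀) * (pdR (gausson N) j x : ℂ)) :=
      Stmt15Aux.L2mulC ((huy2 y₀).const_mul _)
        (Stmt15Aux.memLp2_ofReal (Stmt15Aux.memLp2_pdR_gausson j))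
    have h := Complex.reCLM.integral_comp_comm htint
    simp only [Complex.reCLM_apply] at h
    rw [← h]
    have h2 := MeasureTheory.integral_add_right_eq_self (μ := (volume : Measure (Sp N)))
      (fun x : Sp N => (Complex.exp (Complex.I * (θ₀:ℂ)) * u (x - y₀)
        * (pdR (gausson N) j x : ℂ)).re) y₀
    rw [← h2]
    rw [← hzero]
    have h3 := Complex.reCLM.integral_comp_comm hF'0int
    simp only [Complex.reCLM_apply] at h3
    rw [← h3]
    refine integral_congr_ae (Filter.Eventually.of_forall fun x => ?_)
    simp only [add_sub_cancel_right, hF']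
    rw [show x + y₀ + (0:ℝ) • e = x + y₀ from by simp]
end
end
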